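/- arXiv:2405.06937 — 4 statements merged into one kernel-verified Lean document; each statement's English description precedes it below -/
import Mathlib

section
/- Let g be a Schwartz function on ℝ and let f : ℝ → ℂ be continuously differentiable with f and f' bounded. Then for every (t, ξ, λ) ∈ ℝ³ the map t ↦ T_f^{(g)}(t, ξ, λ) is differentiable in t and ∂_t T_f^{(g)}(t, ξ, λ) = T_{f'}^{(g)}(t, ξ, λ). -/
open MeasureTheory Real Complex Finset

noncomputable section

/-- The chirplet transform of `f` with window `g`. -/
def CT (f g : ℝ → ℂ) (t ξ lam : ℝ) : ℂ :=
  ∫ x : ℝ, f x * (starRingEnd ℂ) (g (x - t)) *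
    Complex.exp (-(2 * (π : ℂ) * Complex.I * (ξ : ℂ) * ((x : ℂ) - (t : ℂ)))
      - Complex.I * (π : ℂ) * (lam : ℂ) * ((x : ℂ) - (t : ℂ)) ^ 2)

/-- The window `x ↦ x^n g x`. -/
def tw (n : ℕ) (g : ℝ → ℂ) : ℝ → ℂ := fun x => (x : ℂ) ^ n * g x

/-- The chirplet transform as a function of the time variable. -/
def Tt (f g : ℝ → ℂ) (ξ lam : ℝ) : ℝ → ℂ := fun t => CT f g t ξ lam

/-- The fixed oscillatory kernel. -/
def E (ξ lam : ℝ) (u : ℝ) : ℂ :=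
  Complex.exp (-(2 * (π : ℂ) * Complex.I * (ξ : ℂ) * (u : ℂ))
      - Complex.I * (π : ℂ) * (lam : ℂ) * (u : ℂ) ^ 2)

lemma norm_E (ξ lam u : ℝ) : ‖E ξ lam u‖ = 1 := by
  rw [E, Complex.norm_exp]
  have : (-(2 * (π : ℂ) * Complex.I * (ξ : ℂ) * (u : ℂ))
      - Complex.I * (π : ℂ) * (lam : ℂ) * (u : ℂ) ^ 2).re = 0 := by
    simp [Complex.sub_re, Complex.mul_re, Complex.mul_im, pow_two]
  rw [this, Real.exp_zero]

lemma CT_shift (f g : ℝ → ℂ) (t ξ lam : ℝ) :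
    CT f g t ξ lam = ∫ u : ℝ, f (u + t) * (starRingEnd ℂ) (g u) * E ξ lam u := by
  rw [CT, ← integral_add_right_eq_self (fun x : ℝ => f x * (starRingEnd ℂ) (g (x - t)) *
    Complex.exp (-(2 * (π : ℂ) * Complex.I * (ξ : ℂ) * ((x : ℂ) - (t : ℂ)))
      - Complex.I * (π : ℂ) * (lam : ℂ) * ((x : ℂ) - (t : ℂ)) ^ 2)) t]
  congr 1
  ext u
  have h1 : u + t - t = u := by ring
  have h2 : ((u + t : ℝ) : ℂ) - (t : ℂ) = (u : ℂ) := by push_cast; ring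
  rw [h1, E, h2]

theorem chirplet_deriv_eq_chirplet_of_deriv
    (g : SchwartzMap ℝ ℂ) (f : ℝ → ℂ) (hf : ContDiff ℝ 1 f)
    (hfb : ∃ C : ℝ, ∀ x, ‖f x‖ ≤ C) (hdfb : ∃ C : ℝ, ∀ x, ‖deriv f x‖ ≤ C)
    (t ξ lam : ℝ) :
    HasDerivAt (fun s => CT f (⇑g) s ξ lam) (CT (deriv f) (⇑g) t ξ lam) t := by
  obtain ⟨C, hC⟩ := hfb
  obtain ⟨C', hC'⟩ := hdfb
  have hfc : Continuous f := hf.continuous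
  have hdfc : Continuous (deriv f) := (hf.continuous_deriv le_rfl)
  have hgc : Continuous (⇑g) := g.continuous
  set F : ℝ → ℝ → ℂ := fun s u => f (u + s) * (starRingEnd ℂ) (g u) * E ξ lam u with hF
  set F' : ℝ → ℝ → ℂ := fun s u => deriv f (u + s) * (starRingEnd ℂ) (g u) * E ξ lam u with hF'
  have hEc : Continuous (E ξ lam) := by
    apply Complex.continuous_exp.comp
    fun_prop
  have key := hasDerivAt_integral_of_dominated_loc_of_deriv_le (F := F) (F' := F')
    (μ := volume) (x₀ := t) (s := Metric.ball t 1) (bound := fun u => C' * ‖g u‖) (Metric.ball_mem_nhds t one_pos)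
    ?_ ?_ ?_ ?_ ?_ ?_
  · have h1 : (fun s => ∫ u, F s u) = fun s => CT f (⇑g) s ξ lam := by
      ext s; rw [CT_shift]
    have h2 : (∫ u, F' t u) = CT (deriv f) (⇑g) t ξ lam := by
      rw [CT_shift]
    rw [h1, h2] at key
    exact key.2
  · filter_upwards with s
    exact ((hfc.comp (continuous_id.add continuous_const)).mul
      (Complex.continuous_conj.comp hgc)).mul hEc |>.aestronglyMeasurable
  · apply Integrable.mono' ((g.integrable.norm.const_mul C))
    · exact ((hfc.comp (continuous_id.add continuous_const)).mul
        (Complex.continuous_conj.comp hgc)).mul hEc |>.aestronglyMeasurable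
    · filter_upwards with u
      rw [hF]
      simp only [norm_mul, norm_E, mul_one, RCLike.norm_conj]
      exact mul_le_mul_of_nonneg_right (hC _) (norm_nonneg _)
  · exact ((hdfc.comp (continuous_id.add continuous_const)).mul
      (Complex.continuous_conj.comp hgc)).mul hEc |>.aestronglyMeasurable
  · filter_upwards with u s _
    rw [hF']
    simp only [norm_mul, norm_E, mul_one, RCLike.norm_conj]
    exact mul_le_mul_of_nonneg_right (hC' _) (norm_nonneg _)
  · exact g.integrable.norm.const_mul C'
  · filter_upwards with u s _
    have hd : HasDerivAt (fun s => f (u + s)) (deriv f (u + s)) s := by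
      exact HasDerivAt.comp_const_add u s (hf.differentiable one_ne_zero (u + s)).hasDerivAt
    simpa [hF, hF', mul_assoc] using hd.mul_const ((starRingEnd ℂ) (g u) * E ξ lam u)
end
end

section
/- Let g be a Schwartz function on ℝ and f ∈ L²(ℝ). Then for all (t, ξ, λ) ∈ ℝ³: ∂_t T_f^{(g)}(t, ξ, λ) = −T_f^{(g')}(t, ξ, λ) + 2πi ξ T_f^{(g)}(t, ξ, λ) + 2πi λ T_f^{(tg)}(t, ξ, λ). -/
open MeasureTheory Real Complex Finset

noncomputable section

namespace ChirpletAux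

/-- The chirp factor. -/
def Efun (ξ lam : ℝ) : ℝ → ℂ := fun y =>
  Complex.exp (-(2 * (π : ℂ) * Complex.I * (ξ : ℂ) * (y : ℂ))
    - Complex.I * (π : ℂ) * (lam : ℂ) * (y : ℂ) ^ 2)

lemma norm_Efun (ξ lam y : ℝ) : ‖Efun ξ lam y‖ = 1 := by
  have harg : -(2 * (π : ℂ) * Complex.I * (ξ : ℂ) * (y : ℂ))
      - Complex.I * (π : ℂ) * (lam : ℂ) * (y : ℂ) ^ 2
      = ((-(2 * π * ξ * y) - π * lam * y ^ 2 : ℝ) : ℂ) * Complex.I := by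
    push_cast; ring
  rw [Efun]
  rw [harg, Complex.norm_exp, Complex.mul_I_re, Complex.ofReal_im,
    neg_zero, Real.exp_zero]

lemma continuous_Efun (ξ lam : ℝ) : Continuous (Efun ξ lam) := by
  apply Complex.continuous_exp.comp
  fun_prop

/-- Product of two complex L² functions is integrable. -/
lemma int_mul_c {f g : ℝ → ℂ} (hf : MemLp f 2 (volume : Measure ℝ))
    (hg : MemLp g 2 (volume : Measure ℝ)) :
    Integrable (fun x => f x * g x) volume := by
  rw [← memLp_one_iff_integrable]
  have h := hg.smul (r := 1) hf
  exact h

/-- Product of two real L² functions is integrable. -/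
lemma int_mul_r {f g : ℝ → ℝ} (hf : MemLp f 2 (volume : Measure ℝ))
    (hg : MemLp g 2 (volume : Measure ℝ)) :
    Integrable (fun x => f x * g x) volume := by
  rw [← memLp_one_iff_integrable]
  have h := hg.smul (r := 1) hf
  exact h

lemma weight_cont (t : ℝ) : Continuous (fun x : ℝ => ((1 : ℝ) + (x - t) ^ 2)⁻¹) := by
  refine Continuous.inv₀ (by fun_prop) fun x => by positivity

lemma weight_mem2 (t : ℝ) :
    MemLp (fun x : ℝ => ((1 : ℝ) + (x - t) ^ 2)⁻¹) 2 (volume : Measure ℝ) := by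
  have hc := weight_cont t
  rw [memLp_two_iff_integrable_sq hc.aestronglyMeasurable]
  have hint : Integrable (fun x : ℝ => ((1 : ℝ) + (x - t) ^ 2)⁻¹) volume := by
    simpa using integrable_inv_one_add_sq.comp_sub_right t
  refine hint.mono' ((hc.pow 2).aestronglyMeasurable) ?_
  filter_upwards with x
  have h1 : (0 : ℝ) < 1 + (x - t) ^ 2 := by positivity
  have h2 : ((1 : ℝ) + (x - t) ^ 2)⁻¹ ≤ 1 := by
    rw [inv_le_one_iff₀]
    right
    nlinarith [sq_nonneg (x - t)]
  have h0 : (0 : ℝ) ≤ ((1 : ℝ) + (x - t) ^ 2)⁻¹ := by positivity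
  rw [Real.norm_eq_abs, _root_.abs_of_nonneg (by positivity)]
  nlinarith [h0, h2]

lemma decay_bound (φ : SchwartzMap ℝ ℂ) (j : ℕ) :
    ∃ C : ℝ, 0 ≤ C ∧ ∀ y : ℝ, |y| ^ j * ‖φ y‖ ≤ C * ((1 : ℝ) + y ^ 2)⁻¹ := by
  obtain ⟨C1, hC1pos, hC1⟩ := φ.decay j 0
  obtain ⟨C2, hC2pos, hC2⟩ := φ.decay (j + 2) 0
  refine ⟨C1 + C2, by positivity, fun y => ?_⟩
  have h1 : (0 : ℝ) < 1 + y ^ 2 := by positivity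
  rw [← div_eq_mul_inv, le_div_iff₀ h1]
  have e1 := hC1 y
  have e2 := hC2 y
  simp only [norm_iteratedFDeriv_zero, Real.norm_eq_abs] at e1 e2
  have hsplit : |y| ^ (j + 2) = |y| ^ j * y ^ 2 := by
    rw [pow_add, _root_.sq_abs]
  rw [hsplit] at e2
  nlinarith [mul_nonneg (pow_nonneg (abs_nonneg y) j) (norm_nonneg (φ y))]

/-- The "correlation kernel" window. -/
def hfun (g : SchwartzMap ℝ ℂ) (ξ lam : ℝ) : ℝ → ℂ := fun y =>
  (starRingEnd ℂ) (g y) * Efun ξ lam y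

/-- Its derivative. -/
def hfun' (g : SchwartzMap ℝ ℂ) (ξ lam : ℝ) : ℝ → ℂ := fun y =>
  (starRingEnd ℂ) (deriv (⇑g) y) * Efun ξ lam y
    + (starRingEnd ℂ) (g y) * Efun ξ lam y *
        (-(2 * (π : ℂ) * Complex.I * (ξ : ℂ)) - 2 * Complex.I * (π : ℂ) * (lam : ℂ) * (y : ℂ))

lemma hfun_hasDeriv (g : SchwartzMap ℝ ℂ) (ξ lam : ℝ) (y : ℝ) :
    HasDerivAt (hfun g ξ lam) (hfun' g ξ lam y) y := by
  have hyc : HasDerivAt (fun y : ℝ => ((y : ℝ) : ℂ)) 1 y := by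
    simpa using (hasDerivAt_id y).ofReal_comp
  have hsq : HasDerivAt (fun y : ℝ => ((y : ℝ) : ℂ) ^ 2) (2 * (y : ℂ)) y := by
    have h2 := hyc.mul hyc
    have he : (1 : ℂ) * (y : ℂ) + (y : ℂ) * 1 = 2 * (y : ℂ) := by ring
    rw [he] at h2
    have h3 : (fun y : ℝ => ((y : ℝ) : ℂ) ^ 2) = ((fun y : ℝ => ((y : ℝ) : ℂ)) * fun y => ((y : ℝ) : ℂ)) := by
      funext z; simp [pow_two]
    rw [h3]
    exact h2
  have hA := (hyc.const_mul (2 * (π : ℂ) * Complex.I * (ξ : ℂ))).neg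
  have hB := hsq.const_mul (Complex.I * (π : ℂ) * (lam : ℂ))
  have hP0 := hA.sub hB
  have hP : HasDerivAt
      (fun y : ℝ => -(2 * (π : ℂ) * Complex.I * (ξ : ℂ) * ((y : ℝ) : ℂ))
        - Complex.I * (π : ℂ) * (lam : ℂ) * ((y : ℝ) : ℂ) ^ 2)
      (-(2 * (π : ℂ) * Complex.I * (ξ : ℂ)) - 2 * Complex.I * (π : ℂ) * (lam : ℂ) * (y : ℂ)) y := by
    exact hP0.congr_deriv (by ring)
  have hE : HasDerivAt (Efun ξ lam)
      (Efun ξ lam y *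
        (-(2 * (π : ℂ) * Complex.I * (ξ : ℂ)) - 2 * Complex.I * (π : ℂ) * (lam : ℂ) * (y : ℂ))) y :=
    hP.cexp
  have hg1 : HasDerivAt (⇑g) (deriv (⇑g) y) y := g.differentiableAt.hasDerivAt
  have hcj : HasDerivAt (fun y => (starRingEnd ℂ) (g y)) ((starRingEnd ℂ) (deriv (⇑g) y)) y := by
    simpa using hg1.star
  have := hcj.mul hE
  exact this.congr_deriv (by simp only [hfun']; ring)

lemma deriv_eq_clm (g : SchwartzMap ℝ ℂ) : deriv (⇑g) = ⇑(SchwartzMap.derivCLM ℝ ℂ g) :=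
  funext fun y => (SchwartzMap.derivCLM_apply ℝ g y).symm

lemma continuous_hfun (g : SchwartzMap ℝ ℂ) (ξ lam : ℝ) : Continuous (hfun g ξ lam) :=
  (Complex.continuous_conj.comp g.continuous).mul (continuous_Efun ξ lam)

lemma continuous_hfun' (g : SchwartzMap ℝ ℂ) (ξ lam : ℝ) : Continuous (hfun' g ξ lam) := by
  unfold hfun'
  rw [deriv_eq_clm]
  exact ((Complex.continuous_conj.comp (SchwartzMap.derivCLM ℝ ℂ g).continuous).mul
      (continuous_Efun ξ lam)).add
    (((Complex.continuous_conj.comp g.continuous).mul (continuous_Efun ξ lam)).mul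
      (continuous_const.sub (continuous_const.mul Complex.continuous_ofReal)))

lemma hfun_bound (g : SchwartzMap ℝ ℂ) (ξ lam : ℝ) :
    ∃ C : ℝ, 0 ≤ C ∧ ∀ y : ℝ, ‖hfun g ξ lam y‖ ≤ C * ((1 : ℝ) + y ^ 2)⁻¹ := by
  obtain ⟨C, hC0, hC⟩ := decay_bound g 0
  refine ⟨C, hC0, fun y => ?_⟩
  have := hC y
  simp only [pow_zero, one_mul] at this
  calc ‖hfun g ξ lam y‖ = ‖g y‖ := by
        simp only [hfun]
        rw [norm_mul, RCLike.norm_conj, norm_Efun, mul_one]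
    _ ≤ C * ((1 : ℝ) + y ^ 2)⁻¹ := this

lemma hfun'_bound (g : SchwartzMap ℝ ℂ) (ξ lam : ℝ) :
    ∃ D : ℝ, 0 ≤ D ∧ ∀ y : ℝ, ‖hfun' g ξ lam y‖ ≤ D * ((1 : ℝ) + y ^ 2)⁻¹ := by
  obtain ⟨C1, hC10, hC1⟩ := decay_bound (SchwartzMap.derivCLM ℝ ℂ g) 0
  obtain ⟨C2, hC20, hC2⟩ := decay_bound g 0
  obtain ⟨C3, hC30, hC3⟩ := decay_bound g 1
  set a : ℝ := ‖(2 * (π : ℂ) * Complex.I * (ξ : ℂ) : ℂ)‖ with ha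
  set b : ℝ := ‖(2 * Complex.I * (π : ℂ) * (lam : ℂ) : ℂ)‖ with hb
  refine ⟨C1 + a * C2 + b * C3, by positivity, fun y => ?_⟩
  set w : ℝ := ((1 : ℝ) + y ^ 2)⁻¹ with hw
  have hw0 : 0 ≤ w := by positivity
  have e1 : ‖deriv (⇑g) y‖ ≤ C1 * w := by
    have := hC1 y
    simp only [pow_zero, one_mul] at this
    rw [deriv_eq_clm]
    exact this
  have e2 : ‖g y‖ ≤ C2 * w := by
    have := hC2 y
    simpa using this
  have e3 : |y| * ‖g y‖ ≤ C3 * w := by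
    have := hC3 y
    simpa using this
  have hnc : ‖-(2 * (π : ℂ) * Complex.I * (ξ : ℂ))
      - 2 * Complex.I * (π : ℂ) * (lam : ℂ) * (y : ℂ)‖ ≤ a + b * |y| := by
    have hneg : -(2 * (π : ℂ) * Complex.I * (ξ : ℂ))
        - 2 * Complex.I * (π : ℂ) * (lam : ℂ) * (y : ℂ)
        = -((2 * (π : ℂ) * Complex.I * (ξ : ℂ))
          + (2 * Complex.I * (π : ℂ) * (lam : ℂ)) * (y : ℂ)) := by ring
    rw [hneg, norm_neg]
    refine le_trans (norm_add_le _ _) (le_of_eq ?_)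
    congr 1
    simp only [hb, norm_mul, Complex.norm_real, Real.norm_eq_abs]
  have hnorm : ‖hfun' g ξ lam y‖ ≤ ‖deriv (⇑g) y‖ + ‖g y‖ * (a + b * |y|) := by
    calc ‖hfun' g ξ lam y‖
        ≤ ‖(starRingEnd ℂ) (deriv (⇑g) y) * Efun ξ lam y‖
          + ‖(starRingEnd ℂ) (g y) * Efun ξ lam y *
              (-(2 * (π : ℂ) * Complex.I * (ξ : ℂ))
                - 2 * Complex.I * (π : ℂ) * (lam : ℂ) * (y : ℂ))‖ := norm_add_le _ _
      _ = ‖deriv (⇑g) y‖ + ‖g y‖ * ‖-(2 * (π : ℂ) * Complex.I * (ξ : ℂ))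
              - 2 * Complex.I * (π : ℂ) * (lam : ℂ) * (y : ℂ)‖ := by
          rw [norm_mul, norm_mul, norm_mul, RCLike.norm_conj, RCLike.norm_conj,
            norm_Efun, mul_one, mul_one]
      _ ≤ ‖deriv (⇑g) y‖ + ‖g y‖ * (a + b * |y|) := by
          gcongr
  have hmul1 : ‖g y‖ * a ≤ a * (C2 * w) :=
    by nlinarith [mul_le_mul_of_nonneg_left e2 (norm_nonneg (2 * (π : ℂ) * Complex.I * (ξ : ℂ)))]
  have hmul2 : ‖g y‖ * (b * |y|) ≤ b * (C3 * w) := by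
    have := mul_le_mul_of_nonneg_left e3 (norm_nonneg (2 * Complex.I * (π : ℂ) * (lam : ℂ)))
    nlinarith [this]
  calc ‖hfun' g ξ lam y‖ ≤ ‖deriv (⇑g) y‖ + ‖g y‖ * (a + b * |y|) := hnorm
    _ ≤ C1 * w + (a * (C2 * w) + b * (C3 * w)) := by nlinarith [e1, hmul1, hmul2]
    _ = (C1 + a * C2 + b * C3) * w := by ring

lemma piece_int {f : ℝ → ℂ} (hf : MemLp f 2 (volume : Measure ℝ)) {K : ℝ → ℂ}
    (hK : Continuous K) {C : ℝ} (hC : ∀ y, ‖K y‖ ≤ C * ((1 : ℝ) + y ^ 2)⁻¹) (t : ℝ) :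
    Integrable (fun x => f x * K (x - t)) volume := by
  apply int_mul_c hf
  refine MemLp.of_le_mul (c := C) (weight_mem2 t)
    ((hK.comp (by fun_prop : Continuous fun x : ℝ => x - t)).aestronglyMeasurable) ?_
  filter_upwards with x
  have hle := hC (x - t)
  have hw : (0 : ℝ) ≤ ((1 : ℝ) + (x - t) ^ 2)⁻¹ := by positivity
  calc ‖K (x - t)‖ ≤ C * ((1 : ℝ) + (x - t) ^ 2)⁻¹ := hle
    _ = C * ‖((1 : ℝ) + (x - t) ^ 2)⁻¹‖ := by
        rw [Real.norm_eq_abs, _root_.abs_of_nonneg hw]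

end ChirpletAux

open ChirpletAux

theorem chirplet_deriv_replacement_first
    (g : SchwartzMap ℝ ℂ) (f : ℝ → ℂ) (hf : MemLp f 2 (volume : Measure ℝ))
    (t ξ lam : ℝ) :
    deriv (Tt f (⇑g) ξ lam) t =
      -CT f (deriv (⇑g)) t ξ lam
        + 2 * (π : ℂ) * Complex.I * (ξ : ℂ) * CT f (⇑g) t ξ lam
        + 2 * (π : ℂ) * Complex.I * (lam : ℂ) * CT f (tw 1 (⇑g)) t ξ lam := by
  obtain ⟨Ch, hCh0, hCh⟩ := hfun_bound g ξ lam
  obtain ⟨D, hD0, hD⟩ := hfun'_bound g ξ lam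
  -- the integral representation
  have hTt : Tt f (⇑g) ξ lam = fun t' => ∫ x : ℝ, f x * hfun g ξ lam (x - t') := by
    funext t'
    simp only [Tt, CT, hfun, Efun, Complex.ofReal_sub, mul_assoc]
  -- apply differentiation under the integral sign
  have key := hasDerivAt_integral_of_dominated_loc_of_deriv_le (μ := volume) (𝕜 := ℝ)
    (F := fun t' x => f x * hfun g ξ lam (x - t'))
    (F' := fun t' x => -(f x * hfun' g ξ lam (x - t')))
    (bound := fun x => ‖f x‖ * (3 * D * ((1 : ℝ) + (x - t) ^ 2)⁻¹))
    (x₀ := t) (s := Metric.ball t 1) (Metric.ball_mem_nhds t one_pos)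
    (by
      filter_upwards with t'
      exact hf.1.mul ((continuous_hfun g ξ lam).comp
        (by fun_prop : Continuous fun x : ℝ => x - t')).aestronglyMeasurable)
    (piece_int hf (continuous_hfun g ξ lam) hCh t)
    ((hf.1.mul ((continuous_hfun' g ξ lam).comp
        (by fun_prop : Continuous fun x : ℝ => x - t)).aestronglyMeasurable).neg)
    (by
      filter_upwards with x
      intro t' ht'
      have hdist : |t' - t| < 1 := by
        rw [Metric.mem_ball, Real.dist_eq] at ht'
        exact ht'
      have hb : 1 + (x - t) ^ 2 ≤ 3 * (1 + (x - t') ^ 2) := by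
        nlinarith [sq_nonneg ((x - t') - (t' - t)), sq_nonneg ((x - t') + (t' - t)),
          _root_.sq_abs (t' - t), abs_nonneg (t' - t), hdist]
      have hpos1 : (0 : ℝ) < 1 + (x - t') ^ 2 := by positivity
      have hpos2 : (0 : ℝ) < 1 + (x - t) ^ 2 := by positivity
      have hinv : ((1 : ℝ) + (x - t') ^ 2)⁻¹ ≤ 3 * ((1 : ℝ) + (x - t) ^ 2)⁻¹ := by
        have hb3 : (1 + (x - t) ^ 2) / 3 ≤ 1 + (x - t') ^ 2 := by linarith
        calc ((1 : ℝ) + (x - t') ^ 2)⁻¹ = 1 / (1 + (x - t') ^ 2) := (one_div _).symm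
          _ ≤ 1 / ((1 + (x - t) ^ 2) / 3) := by
              apply one_div_le_one_div_of_le (by positivity) hb3
          _ = 3 * ((1 : ℝ) + (x - t) ^ 2)⁻¹ := by
              rw [one_div_div, div_eq_mul_inv]
      calc ‖-(f x * hfun' g ξ lam (x - t'))‖ = ‖f x‖ * ‖hfun' g ξ lam (x - t')‖ := by
            rw [norm_neg, norm_mul]
        _ ≤ ‖f x‖ * (D * ((1 : ℝ) + (x - t') ^ 2)⁻¹) := by
            gcongr
            exact hD (x - t')
        _ ≤ ‖f x‖ * (3 * D * ((1 : ℝ) + (x - t) ^ 2)⁻¹) := by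
            gcongr ‖f x‖ * ?_
            calc D * ((1 : ℝ) + (x - t') ^ 2)⁻¹ ≤ D * (3 * ((1 : ℝ) + (x - t) ^ 2)⁻¹) := by
                  gcongr
              _ = 3 * D * ((1 : ℝ) + (x - t) ^ 2)⁻¹ := by ring)
    (by
      apply int_mul_r hf.norm
      exact (weight_mem2 t).const_mul (3 * D))
    (by
      filter_upwards with x
      intro t' ht'
      have hsub : HasDerivAt (fun t'' : ℝ => x - t'') (-1) t' := by
        simpa using (hasDerivAt_id t').const_sub x
      have hcm := (hfun_hasDeriv g ξ lam (x - t')).scomp t' hsub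
      have hfin : HasDerivAt (fun t'' : ℝ => f x * hfun g ξ lam (x - t''))
          (-(f x * hfun' g ξ lam (x - t'))) t' := by
        have h5 := HasDerivAt.const_mul (f x) hcm
        simpa [Function.comp, neg_smul, one_smul, mul_neg] using h5
      exact hfin)
  have hderivat := key.2
  rw [hTt]
  rw [hderivat.deriv]
  -- now compute the integral of the derivative
  obtain ⟨C1, hC10, hC1⟩ := decay_bound (SchwartzMap.derivCLM ℝ ℂ g) 0
  obtain ⟨C2, hC20, hC2⟩ := decay_bound g 0
  obtain ⟨C3, hC30, hC3⟩ := decay_bound g 1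
  -- the three kernels
  set KA : ℝ → ℂ := fun y => -((starRingEnd ℂ) (deriv (⇑g) y) * Efun ξ lam y) with hKA
  set KB : ℝ → ℂ := fun y =>
    (2 * (π : ℂ) * Complex.I * (ξ : ℂ)) * ((starRingEnd ℂ) (g y) * Efun ξ lam y) with hKB
  set KC : ℝ → ℂ := fun y =>
    (2 * (π : ℂ) * Complex.I * (lam : ℂ)) * ((starRingEnd ℂ) (tw 1 (⇑g) y) * Efun ξ lam y) with hKC
  have hKAc : Continuous KA := by
    rw [hKA, deriv_eq_clm]
    exact ((Complex.continuous_conj.comp (SchwartzMap.derivCLM ℝ ℂ g).continuous).mul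
      (continuous_Efun ξ lam)).neg
  have hKBc : Continuous KB :=
    continuous_const.mul ((Complex.continuous_conj.comp g.continuous).mul (continuous_Efun ξ lam))
  have hKCc : Continuous KC := by
    apply continuous_const.mul
    apply Continuous.mul _ (continuous_Efun ξ lam)
    apply Complex.continuous_conj.comp
    unfold tw
    fun_prop
  have hKAb : ∀ y : ℝ, ‖KA y‖ ≤ C1 * ((1 : ℝ) + y ^ 2)⁻¹ := by
    intro y
    have := hC1 y
    simp only [pow_zero, one_mul] at this
    rw [hKA]
    simp only [norm_neg, norm_mul, RCLike.norm_conj, norm_Efun, mul_one]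
    rw [deriv_eq_clm]
    exact this
  have hKBb : ∀ y : ℝ, ‖KB y‖ ≤ ‖(2 * (π : ℂ) * Complex.I * (ξ : ℂ) : ℂ)‖ * C2
      * ((1 : ℝ) + y ^ 2)⁻¹ := by
    intro y
    have h2 := hC2 y
    simp only [pow_zero, one_mul] at h2
    have hn : ‖KB y‖ = ‖(2 * (π : ℂ) * Complex.I * (ξ : ℂ) : ℂ)‖ * ‖g y‖ := by
      simp only [hKB]
      rw [norm_mul (2 * (π : ℂ) * Complex.I * (ξ : ℂ))
        ((starRingEnd ℂ) (g y) * Efun ξ lam y),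
        norm_mul ((starRingEnd ℂ) (g y)) (Efun ξ lam y), RCLike.norm_conj, norm_Efun, mul_one]
    calc ‖KB y‖ = ‖(2 * (π : ℂ) * Complex.I * (ξ : ℂ) : ℂ)‖ * ‖g y‖ := hn
      _ ≤ ‖(2 * (π : ℂ) * Complex.I * (ξ : ℂ) : ℂ)‖ * (C2 * ((1 : ℝ) + y ^ 2)⁻¹) :=
          mul_le_mul_of_nonneg_left h2 (norm_nonneg _)
      _ = ‖(2 * (π : ℂ) * Complex.I * (ξ : ℂ) : ℂ)‖ * C2 * ((1 : ℝ) + y ^ 2)⁻¹ := by ring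
  have hKCb : ∀ y : ℝ, ‖KC y‖ ≤ ‖(2 * (π : ℂ) * Complex.I * (lam : ℂ) : ℂ)‖ * C3
      * ((1 : ℝ) + y ^ 2)⁻¹ := by
    intro y
    have h3 := hC3 y
    simp only [pow_one] at h3
    have htw : ‖tw 1 (⇑g) y‖ = |y| * ‖g y‖ := by
      simp only [tw, pow_one, norm_mul, Complex.norm_real, Real.norm_eq_abs]
    have hn : ‖KC y‖ = ‖(2 * (π : ℂ) * Complex.I * (lam : ℂ) : ℂ)‖ * (|y| * ‖g y‖) := by
      simp only [hKC]
      rw [norm_mul (2 * (π : ℂ) * Complex.I * (lam : ℂ))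
        ((starRingEnd ℂ) (tw 1 (⇑g) y) * Efun ξ lam y),
        norm_mul ((starRingEnd ℂ) (tw 1 (⇑g) y)) (Efun ξ lam y), RCLike.norm_conj, norm_Efun,
        mul_one, htw]
    calc ‖KC y‖ = ‖(2 * (π : ℂ) * Complex.I * (lam : ℂ) : ℂ)‖ * (|y| * ‖g y‖) := hn
      _ ≤ ‖(2 * (π : ℂ) * Complex.I * (lam : ℂ) : ℂ)‖ * (C3 * ((1 : ℝ) + y ^ 2)⁻¹) :=
          mul_le_mul_of_nonneg_left h3 (norm_nonneg _)
      _ = ‖(2 * (π : ℂ) * Complex.I * (lam : ℂ) : ℂ)‖ * C3 * ((1 : ℝ) + y ^ 2)⁻¹ := by ring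
  have hIA : Integrable (fun x => f x * KA (x - t)) volume := piece_int hf hKAc hKAb t
  have hIB : Integrable (fun x => f x * KB (x - t)) volume := piece_int hf hKBc hKBb t
  have hIC : Integrable (fun x => f x * KC (x - t)) volume := piece_int hf hKCc hKCb t
  have hsplit : (fun x : ℝ => -(f x * hfun' g ξ lam (x - t)))
      = fun x : ℝ => f x * KA (x - t) + f x * KB (x - t) + f x * KC (x - t) := by
    funext x
    simp only [hKA, hKB, hKC, hfun', tw, map_mul, map_pow, Complex.conj_ofReal, pow_one]
    ring
  have hIAB : Integrable (fun x : ℝ => f x * KA (x - t) + f x * KB (x - t)) volume :=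
    hIA.add hIB
  rw [hsplit, integral_add hIAB hIC, integral_add hIA hIB]
  have hEsub : ∀ x : ℝ, Efun ξ lam (x - t) =
      Complex.exp (-(2 * (π : ℂ) * Complex.I * (ξ : ℂ) * ((x : ℂ) - (t : ℂ)))
        - Complex.I * (π : ℂ) * (lam : ℂ) * ((x : ℂ) - (t : ℂ)) ^ 2) := by
    intro x
    simp only [Efun, Complex.ofReal_sub]
  have hA : (∫ x : ℝ, f x * KA (x - t)) = -CT f (deriv (⇑g)) t ξ lam := by
    simp only [CT]
    rw [← integral_neg]
    congr 1
    funext x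
    simp only [hKA]
    rw [hEsub x]
    ring
  have hB : (∫ x : ℝ, f x * KB (x - t))
      = 2 * (π : ℂ) * Complex.I * (ξ : ℂ) * CT f (⇑g) t ξ lam := by
    simp only [CT]
    rw [← integral_const_mul]
    congr 1
    funext x
    simp only [hKB]
    rw [hEsub x]
    ring
  have hC : (∫ x : ℝ, f x * KC (x - t))
      = 2 * (π : ℂ) * Complex.I * (lam : ℂ) * CT f (tw 1 (⇑g)) t ξ lam := by
    simp only [CT]
    rw [← integral_const_mul]
    congr 1
    funext x
    simp only [hKC]
    rw [hEsub x]
    ring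
  rw [hA, hB, hC]
end
end

section
/- Let g be a Schwartz function on ℝ and f ∈ L²(ℝ). Then for all (t, ξ, λ) ∈ ℝ³: ∂²_{tt} T_f^{(g)} = T_f^{(g'')} − 4πi ξ T_f^{(g')} − 2πi λ T_f^{(tg')} + (2πi ξ)² T_f^{(g)} + 2(2πi ξ)(2πi λ) T_f^{(tg)} − 2πi λ (T_f^{(g)} + T_f^{(tg')}) + (2πi λ)² T_f^{(t²g)}, where all transforms are evaluated at (t, ξ, λ). -/
open MeasureTheory Real Complex Finset

noncomputable section

namespace ChirpAux

open SchwartzMap Metric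

/-- Multiplication by `x` on Schwartz space. -/
def mulX : SchwartzMap ℝ ℂ →L[ℝ] SchwartzMap ℝ ℂ :=
  SchwartzMap.bilinLeftCLM ((ContinuousLinearMap.mul ℝ ℂ).flip)
    (ContinuousLinearMap.hasTemperateGrowth Complex.ofRealCLM)

lemma mulX_apply (h : SchwartzMap ℝ ℂ) (x : ℝ) : mulX h x = (x : ℂ) * h x := rfl

lemma derivCLM_coe (h : SchwartzMap ℝ ℂ) : ⇑(SchwartzMap.derivCLM ℝ ℂ h) = deriv ⇑h :=
  funext fun x => SchwartzMap.derivCLM_apply ℝ h x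

lemma decay2 (h : SchwartzMap ℝ ℂ) (k : ℕ) :
    ∃ C : ℝ, 0 ≤ C ∧ ∀ u : ℝ, (1 + |u|) ^ k * ‖h u‖ ≤ C := by
  refine ⟨2 ^ k * ((Finset.Iic (k, 0)).sup fun m => SchwartzMap.seminorm ℝ m.1 m.2) h, ?_, ?_⟩
  · positivity
  · intro u
    have := SchwartzMap.one_add_le_sup_seminorm_apply (𝕜 := ℝ) (m := (k, 0)) le_rfl le_rfl h u
    simpa [norm_iteratedFDeriv_zero, Real.norm_eq_abs] using this

/-- The chirp phase factor. -/
def ee (ξ lam : ℝ) (u : ℝ) : ℂ :=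
  Complex.exp (-(2 * (π : ℂ) * Complex.I * (ξ : ℂ) * (u : ℂ))
    - Complex.I * (π : ℂ) * (lam : ℂ) * (u : ℂ) ^ 2)

lemma norm_ee (ξ lam u : ℝ) : ‖ee ξ lam u‖ = 1 := by
  rw [ee, Complex.norm_exp]
  have : (-(2 * (π : ℂ) * Complex.I * (ξ : ℂ) * (u : ℂ))
      - Complex.I * (π : ℂ) * (lam : ℂ) * (u : ℂ) ^ 2).re = 0 := by
    simp [Complex.mul_re, Complex.mul_im, ← Complex.ofReal_pow]
  rw [this, Real.exp_zero]

lemma CT_eq (f w : ℝ → ℂ) (t ξ lam : ℝ) :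
    CT f w t ξ lam = ∫ x : ℝ, f x * ((starRingEnd ℂ) (w (x - t)) * ee ξ lam (x - t)) := by
  unfold CT ee
  refine congrArg (integral volume) (funext fun x => ?_)
  push_cast
  ring

lemma cont_window (h : SchwartzMap ℝ ℂ) (ξ lam t : ℝ) :
    Continuous fun x : ℝ => (starRingEnd ℂ) (h (x - t)) * ee ξ lam (x - t) := by
  apply Continuous.mul
  · exact Complex.continuous_conj.comp (h.continuous.comp (continuous_id.sub continuous_const))
  · unfold ee
    fun_prop

lemma memL2_decay (t₀ : ℝ) :
    MemLp (fun x : ℝ => ((1 + |x - t₀|) ^ 2)⁻¹) 2 (volume : Measure ℝ) := by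
  have hc : Continuous fun x : ℝ => ((1 + |x - t₀|) ^ 2)⁻¹ := by
    apply Continuous.inv₀
    · fun_prop
    · intro x; positivity
  rw [memLp_two_iff_integrable_sq hc.aestronglyMeasurable]
  have h1 : Integrable (fun x : ℝ => (1 + ‖x‖) ^ (-(4 : ℝ))) :=
    integrable_one_add_norm (by norm_num)
  have h2 := h1.comp_sub_right t₀
  apply h2.mono' ((hc.pow 2).aestronglyMeasurable)
  filter_upwards with x
  have h3 : (0:ℝ) < 1 + |x - t₀| := by positivity
  simp only [Real.norm_eq_abs, Pi.pow_apply]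
  rw [_root_.abs_of_nonneg (by positivity : (0:ℝ) ≤ ((1 + |x - t₀|) ^ 2)⁻¹ ^ 2),
    Real.rpow_neg h3.le, show ((4:ℝ) = ((4:ℕ):ℝ)) by norm_num, Real.rpow_natCast,
    ← inv_pow, ← pow_mul]
  norm_num [inv_pow]

lemma integrable_L2_mul {f : ℝ → ℂ} (hf : MemLp f 2 (volume : Measure ℝ)) (φ : ℝ → ℝ)
    (hφ : MemLp φ 2 (volume : Measure ℝ)) :
    Integrable (fun x => φ x * ‖f x‖) (volume : Measure ℝ) := by
  haveI : ENNReal.HolderTriple 2 2 1 := ⟨by simp [ENNReal.inv_two_add_inv_two]⟩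
  have h := (hf.norm).smul hφ (p := 2) (q := 2) (r := 1)
  exact memLp_one_iff_integrable.mp h

lemma window_le (h : SchwartzMap ℝ ℂ) {C : ℝ} (hC : ∀ u : ℝ, (1 + |u|) ^ 2 * ‖h u‖ ≤ C)
    (u : ℝ) : ‖h u‖ ≤ C * ((1 + |u|) ^ 2)⁻¹ := by
  have hv : (0:ℝ) < (1 + |u|) ^ 2 := by positivity
  rw [← div_eq_mul_inv, le_div_iff₀ hv]
  nlinarith [hC u]

lemma integrable_integrand {f : ℝ → ℂ} (hf : MemLp f 2 (volume : Measure ℝ)) (ξ lam : ℝ)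
    (h : SchwartzMap ℝ ℂ) (t : ℝ) :
    Integrable (fun x => f x * ((starRingEnd ℂ) (h (x - t)) * ee ξ lam (x - t)))
      (volume : Measure ℝ) := by
  obtain ⟨C, hC0, hC⟩ := decay2 h 2
  have hb : Integrable (fun x => (C * ((1 + |x - t|) ^ 2)⁻¹) * ‖f x‖) volume :=
    integrable_L2_mul hf _ ((memL2_decay t).const_mul C)
  apply hb.mono' (hf.1.mul (cont_window h ξ lam t).aestronglyMeasurable)
  filter_upwards with x
  simp only [Pi.mul_apply]
  rw [norm_mul, norm_mul, norm_ee, mul_one, RCLike.norm_conj]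
  have h1 := window_le h hC (x - t)
  have h0 : (0:ℝ) ≤ ‖f x‖ := norm_nonneg _
  nlinarith [h1]

lemma hasDerivAt_F (f : ℝ → ℂ) (ξ lam : ℝ) (h : SchwartzMap ℝ ℂ) (x t : ℝ) :
    HasDerivAt (fun s : ℝ => f x * ((starRingEnd ℂ) (h (x - s)) * ee ξ lam (x - s)))
      (f x * ((-((starRingEnd ℂ) (deriv (⇑h) (x - t)))
          + (2*(π:ℂ)*Complex.I*ξ + 2*(π:ℂ)*Complex.I*lam*((x - t : ℝ):ℂ))
            * (starRingEnd ℂ) (h (x - t)))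
        * ee ξ lam (x - t))) t := by
  have hu : HasDerivAt (fun s : ℝ => x - s) (-1) t := by
    simpa using (hasDerivAt_id t).const_sub x
  have hh : HasDerivAt (fun s : ℝ => h (x - s)) (-(deriv (⇑h) (x - t))) t := by
    have hd : HasDerivAt (⇑h) (deriv (⇑h) (x - t)) (x - t) :=
      (h.differentiable.differentiableAt).hasDerivAt
    simpa [Function.comp_def] using hd.scomp t hu
  have hconj : HasDerivAt (fun s : ℝ => (starRingEnd ℂ) (h (x - s)))
      (-((starRingEnd ℂ) (deriv (⇑h) (x - t)))) t := by
    simpa [Complex.star_def] using hh.star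
  have huc : HasDerivAt (fun s : ℝ => ((x - s : ℝ) : ℂ)) (-1) t := by
    simpa using hu.ofReal_comp
  have harg : HasDerivAt (fun s : ℝ => -(2*(π:ℂ)*Complex.I*ξ*((x - s:ℝ):ℂ))
        - Complex.I*(π:ℂ)*lam*((x - s:ℝ):ℂ)^2)
      (2*(π:ℂ)*Complex.I*ξ + 2*(π:ℂ)*Complex.I*lam*((x - t:ℝ):ℂ)) t := by
    have h1 := (huc.const_mul (2*(π:ℂ)*Complex.I*ξ)).fun_neg
    have hsq : HasDerivAt (fun s : ℝ => ((x - s:ℝ):ℂ)^2) (-2 * ((x - t:ℝ):ℂ)) t := by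
      have hmm := huc.fun_mul huc
      simp only [pow_two]
      exact hmm.congr_deriv (by ring)
    have h2 := hsq.const_mul (Complex.I*(π:ℂ)*lam)
    exact (h1.fun_sub h2).congr_deriv (by push_cast; ring)
  have hexp : HasDerivAt (fun s : ℝ => ee ξ lam (x - s))
      (ee ξ lam (x - t) * (2*(π:ℂ)*Complex.I*ξ + 2*(π:ℂ)*Complex.I*lam*((x - t:ℝ):ℂ))) t := by
    simpa [ee] using harg.cexp
  have hfin := (hconj.fun_mul hexp).const_mul (f x)
  exact hfin.congr_deriv (by ring)


lemma key {f : ℝ → ℂ} (hf : MemLp f 2 (volume : Measure ℝ)) (ξ lam : ℝ)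
    (h : SchwartzMap ℝ ℂ) (t₀ : ℝ) :
    HasDerivAt (Tt f (⇑h) ξ lam)
      (-(CT f (⇑(SchwartzMap.derivCLM ℝ ℂ h)) t₀ ξ lam)
        + (2*(π:ℂ)*Complex.I*ξ) * CT f (⇑h) t₀ ξ lam
        + (2*(π:ℂ)*Complex.I*lam) * CT f (⇑(mulX h)) t₀ ξ lam) t₀ := by
  obtain ⟨C₁, hC₁0, hC₁⟩ := decay2 (SchwartzMap.derivCLM ℝ ℂ h) 2
  obtain ⟨C₂, hC₂0, hC₂⟩ := decay2 h 2
  obtain ⟨C₃, hC₃0, hC₃⟩ := decay2 h 3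
  set B : ℝ := C₁ + 2*π*|ξ| *C₂ + 2*π*|lam| *C₃ with hBdef
  have hB0 : 0 ≤ B := by
    have := Real.pi_pos
    have h1 : 0 ≤ 2*π*|ξ| *C₂ := by positivity
    have h2 : 0 ≤ 2*π*|lam| *C₃ := by positivity
    linarith
  have hBpt : ∀ u : ℝ,
      ‖-((starRingEnd ℂ) (deriv (⇑h) u))
        + (2*(π:ℂ)*Complex.I*ξ + 2*(π:ℂ)*Complex.I*lam*(u:ℂ)) * (starRingEnd ℂ) (h u)‖
        ≤ B * ((1 + |u|) ^ 2)⁻¹ := by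
    intro u
    have hv : (0:ℝ) < (1 + |u|) ^ 2 := by positivity
    have n1 : ‖(2*(π:ℂ)*Complex.I*(ξ:ℂ))‖ = 2*π*|ξ| := by
      simp [norm_mul, Complex.norm_I, Complex.norm_real, Real.norm_eq_abs,
        _root_.abs_of_pos Real.pi_pos]
    have n2 : ‖(2*(π:ℂ)*Complex.I*(lam:ℂ)*(u:ℂ))‖ = 2*π*|lam| *|u| := by
      simp [norm_mul, Complex.norm_I, Complex.norm_real, Real.norm_eq_abs,
        _root_.abs_of_pos Real.pi_pos]
    have e1 : ‖(2*(π:ℂ)*Complex.I*ξ + 2*(π:ℂ)*Complex.I*lam*(u:ℂ))‖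
        ≤ 2*π*|ξ| + 2*π*|lam| *|u| := by
      refine (norm_add_le _ _).trans ?_
      rw [n1, n2]
    have b1 : ‖deriv (⇑h) u‖ ≤ C₁ * ((1 + |u|) ^ 2)⁻¹ := by
      have := window_le (SchwartzMap.derivCLM ℝ ℂ h) hC₁ u
      rwa [SchwartzMap.derivCLM_apply] at this
    have b2 : ‖h u‖ ≤ C₂ * ((1 + |u|) ^ 2)⁻¹ := window_le h hC₂ u
    have b3 : |u| * ‖h u‖ ≤ C₃ * ((1 + |u|) ^ 2)⁻¹ := by
      rw [← div_eq_mul_inv, le_div_iff₀ hv]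
      have hcube : (1 + |u|) ^ 3 = (1 + |u|) ^ 2 * (1 + |u|) := by ring
      nlinarith [hC₃ u, mul_nonneg (pow_nonneg (by positivity : (0:ℝ) ≤ 1 + |u|) 2)
        (norm_nonneg (h u)), abs_nonneg u, norm_nonneg (h u)]
    calc ‖-((starRingEnd ℂ) (deriv (⇑h) u))
          + (2*(π:ℂ)*Complex.I*ξ + 2*(π:ℂ)*Complex.I*lam*(u:ℂ)) * (starRingEnd ℂ) (h u)‖
        ≤ ‖deriv (⇑h) u‖ + (2*π*|ξ| + 2*π*|lam| *|u|) * ‖h u‖ := by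
          refine (norm_add_le _ _).trans ?_
          rw [norm_neg, RCLike.norm_conj, norm_mul, RCLike.norm_conj]
          have := mul_le_mul_of_nonneg_right e1 (norm_nonneg (h u))
          linarith
      _ ≤ C₁ * ((1 + |u|) ^ 2)⁻¹ + (2*π*|ξ|) * (C₂ * ((1 + |u|) ^ 2)⁻¹)
            + (2*π*|lam|) * (C₃ * ((1 + |u|) ^ 2)⁻¹) := by
          have hπ := Real.pi_pos
          have t2 : (2*π*|ξ|) * ‖h u‖ ≤ (2*π*|ξ|) * (C₂ * ((1 + |u|) ^ 2)⁻¹) :=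
            mul_le_mul_of_nonneg_left b2 (by positivity)
          have t3 : (2*π*|lam|) * (|u| * ‖h u‖) ≤ (2*π*|lam|) * (C₃ * ((1 + |u|) ^ 2)⁻¹) :=
            mul_le_mul_of_nonneg_left b3 (by positivity)
          nlinarith [t2, t3, b1]
      _ = B * ((1 + |u|) ^ 2)⁻¹ := by rw [hBdef]; ring
  have htrans : ∀ t ∈ Metric.ball t₀ (1:ℝ), ∀ x : ℝ,
      ((1 + |x - t|) ^ 2)⁻¹ ≤ 4 * ((1 + |x - t₀|) ^ 2)⁻¹ := by
    intro t ht x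
    have hd : |t - t₀| < 1 := by
      rw [Metric.mem_ball, Real.dist_eq] at ht; exact ht
    have h1 : |x - t₀| ≤ |x - t| + |t - t₀| := by
      have : x - t₀ = (x - t) + (t - t₀) := by ring
      rw [this]; exact abs_add_le _ _
    have hv1 : (0:ℝ) < (1 + |x - t|) ^ 2 := by positivity
    have hv2 : (0:ℝ) < (1 + |x - t₀|) ^ 2 := by positivity
    have h2 : |x - t₀| ≤ |x - t| + 1 := by linarith
    calc ((1 + |x - t|) ^ 2)⁻¹ ≤ 4 / (1 + |x - t₀|) ^ 2 := by
          rw [inv_eq_one_div, div_le_div_iff₀ hv1 hv2]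
          nlinarith [abs_nonneg (x - t), abs_nonneg (x - t₀)]
      _ = 4 * ((1 + |x - t₀|) ^ 2)⁻¹ := by rw [div_eq_mul_inv]
  -- the dominated-derivative theorem
  have hcontw : Continuous fun x : ℝ =>
      (-((starRingEnd ℂ) (deriv (⇑h) (x - t₀)))
        + (2*(π:ℂ)*Complex.I*ξ + 2*(π:ℂ)*Complex.I*lam*((x - t₀ : ℝ):ℂ))
          * (starRingEnd ℂ) (h (x - t₀))) * ee ξ lam (x - t₀) := by
    rw [← derivCLM_coe]
    apply Continuous.mul
    · apply Continuous.add
      · exact (Complex.continuous_conj.comp ((SchwartzMap.derivCLM ℝ ℂ h).continuous.comp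
          (continuous_id.sub continuous_const))).neg
      · apply Continuous.mul
        · fun_prop
        · exact Complex.continuous_conj.comp (h.continuous.comp
            (continuous_id.sub continuous_const))
    · unfold ee; fun_prop
  have main := hasDerivAt_integral_of_dominated_loc_of_deriv_le (μ := (volume : Measure ℝ))
    (x₀ := t₀) (s := Metric.ball t₀ 1)
    (F := fun t x => f x * ((starRingEnd ℂ) (h (x - t)) * ee ξ lam (x - t)))
    (F' := fun t x => f x * ((-((starRingEnd ℂ) (deriv (⇑h) (x - t)))
        + (2*(π:ℂ)*Complex.I*ξ + 2*(π:ℂ)*Complex.I*lam*((x - t : ℝ):ℂ))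
          * (starRingEnd ℂ) (h (x - t))) * ee ξ lam (x - t)))
    (bound := fun x => (4 * B * ((1 + |x - t₀|) ^ 2)⁻¹) * ‖f x‖)
    (Metric.ball_mem_nhds t₀ one_pos)
    (Filter.Eventually.of_forall fun t =>
      hf.1.mul (cont_window h ξ lam t).aestronglyMeasurable)
    (integrable_integrand hf ξ lam h t₀)
    (hf.1.mul hcontw.aestronglyMeasurable)
    ?_ ?_
    (Filter.Eventually.of_forall fun x t _ => hasDerivAt_F f ξ lam h x t)
  · -- identify the function and the value
    have hTt : Tt f (⇑h) ξ lam
        = fun t => ∫ x : ℝ, f x * ((starRingEnd ℂ) (h (x - t)) * ee ξ lam (x - t)) :=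
      funext fun t => CT_eq f (⇑h) t ξ lam
    have hA := integrable_integrand hf ξ lam (SchwartzMap.derivCLM ℝ ℂ h) t₀
    have hBi := integrable_integrand hf ξ lam h t₀
    have hCi := integrable_integrand hf ξ lam (mulX h) t₀
    have hsplit : (fun x : ℝ => f x * ((-((starRingEnd ℂ) (deriv (⇑h) (x - t₀)))
        + (2*(π:ℂ)*Complex.I*ξ + 2*(π:ℂ)*Complex.I*lam*((x - t₀ : ℝ):ℂ))
          * (starRingEnd ℂ) (h (x - t₀))) * ee ξ lam (x - t₀)))
        = fun x : ℝ =>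
          (-(f x * ((starRingEnd ℂ) ((SchwartzMap.derivCLM ℝ ℂ h) (x - t₀)) * ee ξ lam (x - t₀)))
          + (2*(π:ℂ)*Complex.I*ξ) * (f x * ((starRingEnd ℂ) (h (x - t₀)) * ee ξ lam (x - t₀))))
          + (2*(π:ℂ)*Complex.I*lam)
            * (f x * ((starRingEnd ℂ) ((mulX h) (x - t₀)) * ee ξ lam (x - t₀))) := by
      funext x
      simp only [mulX_apply, map_mul, Complex.conj_ofReal, SchwartzMap.derivCLM_apply]
      ring
    have hval : (∫ x : ℝ, f x * ((-((starRingEnd ℂ) (deriv (⇑h) (x - t₀)))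
        + (2*(π:ℂ)*Complex.I*ξ + 2*(π:ℂ)*Complex.I*lam*((x - t₀ : ℝ):ℂ))
          * (starRingEnd ℂ) (h (x - t₀))) * ee ξ lam (x - t₀)))
        = -(CT f (⇑(SchwartzMap.derivCLM ℝ ℂ h)) t₀ ξ lam)
          + (2*(π:ℂ)*Complex.I*ξ) * CT f (⇑h) t₀ ξ lam
          + (2*(π:ℂ)*Complex.I*lam) * CT f (⇑(mulX h)) t₀ ξ lam := by
      have hA' : Integrable (fun x : ℝ =>
          -(f x * ((starRingEnd ℂ) ((SchwartzMap.derivCLM ℝ ℂ h) (x - t₀)) * ee ξ lam (x - t₀))))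
          (volume : Measure ℝ) := hA.neg
      have hB' : Integrable (fun x : ℝ => (2*(π:ℂ)*Complex.I*ξ)
          * (f x * ((starRingEnd ℂ) (h (x - t₀)) * ee ξ lam (x - t₀))))
          (volume : Measure ℝ) := hBi.const_mul _
      have hC' : Integrable (fun x : ℝ => (2*(π:ℂ)*Complex.I*lam)
          * (f x * ((starRingEnd ℂ) ((mulX h) (x - t₀)) * ee ξ lam (x - t₀))))
          (volume : Measure ℝ) := hCi.const_mul _
      have hAB : Integrable (fun x : ℝ =>
          -(f x * ((starRingEnd ℂ) ((SchwartzMap.derivCLM ℝ ℂ h) (x - t₀)) * ee ξ lam (x - t₀)))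
          + (2*(π:ℂ)*Complex.I*ξ)
            * (f x * ((starRingEnd ℂ) (h (x - t₀)) * ee ξ lam (x - t₀))))
          (volume : Measure ℝ) := hA'.add hB'
      rw [hsplit, integral_add hAB hC', integral_add hA' hB', integral_neg,
        integral_const_mul, integral_const_mul, CT_eq, CT_eq, CT_eq]
    have h2 := main.2
    rw [← hTt] at h2
    rwa [hval] at h2
  · -- the bound
    filter_upwards with x
    intro t ht
    rw [norm_mul, norm_mul, norm_ee, mul_one]
    have hb1 := hBpt (x - t)
    have hb2 := htrans t ht x
    calc ‖f x‖ * ‖-((starRingEnd ℂ) (deriv (⇑h) (x - t)))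
          + (2*(π:ℂ)*Complex.I*ξ + 2*(π:ℂ)*Complex.I*lam*((x - t : ℝ):ℂ))
            * (starRingEnd ℂ) (h (x - t))‖
        ≤ ‖f x‖ * (B * ((1 + |x - t|) ^ 2)⁻¹) :=
          mul_le_mul_of_nonneg_left hb1 (norm_nonneg _)
      _ ≤ ‖f x‖ * (B * (4 * ((1 + |x - t₀|) ^ 2)⁻¹)) := by
          have := mul_le_mul_of_nonneg_left hb2 hB0
          exact mul_le_mul_of_nonneg_left this (norm_nonneg _)
      _ = (4 * B * ((1 + |x - t₀|) ^ 2)⁻¹) * ‖f x‖ := by ring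
  · exact integrable_L2_mul hf _ ((memL2_decay t₀).const_mul (4 * B))


lemma CT_window_add {f : ℝ → ℂ} (hf : MemLp f 2 (volume : Measure ℝ)) (ξ lam t : ℝ)
    (h₁ h₂ : SchwartzMap ℝ ℂ) :
    CT f (fun u => h₁ u + h₂ u) t ξ lam = CT f (⇑h₁) t ξ lam + CT f (⇑h₂) t ξ lam := by
  rw [CT_eq, CT_eq, CT_eq,
    ← integral_add (integrable_integrand hf ξ lam h₁ t) (integrable_integrand hf ξ lam h₂ t)]
  refine congrArg (integral volume) (funext fun x => ?_)
  simp only [map_add]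
  ring

lemma mulX_coe (g : SchwartzMap ℝ ℂ) : ⇑(mulX g) = tw 1 (⇑g) := by
  funext x
  simp [mulX_apply, tw]

lemma mulX_deriv_coe (g : SchwartzMap ℝ ℂ) :
    ⇑(mulX (SchwartzMap.derivCLM ℝ ℂ g)) = tw 1 (deriv (⇑g)) := by
  funext x
  simp [mulX_apply, tw, SchwartzMap.derivCLM_apply]

lemma mulX_mulX_coe (g : SchwartzMap ℝ ℂ) : ⇑(mulX (mulX g)) = tw 2 (⇑g) := by
  funext x
  simp only [mulX_apply, tw]
  ring

lemma deriv_mulX_coe (g : SchwartzMap ℝ ℂ) :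
    ⇑(SchwartzMap.derivCLM ℝ ℂ (mulX g)) = fun x : ℝ => g x + (x:ℂ) * deriv (⇑g) x := by
  funext x
  rw [SchwartzMap.derivCLM_apply]
  have h1 : HasDerivAt (fun y : ℝ => ((y : ℝ) : ℂ)) 1 x := by
    simpa using (hasDerivAt_id x).ofReal_comp
  have h2 : HasDerivAt (⇑g) (deriv (⇑g) x) x := g.differentiable.differentiableAt.hasDerivAt
  have h3 := h1.fun_mul h2
  rw [show ⇑(mulX g) = fun y : ℝ => ((y : ℝ) : ℂ) * g y from funext fun y => mulX_apply g y,
    h3.deriv]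
  ring

end ChirpAux

theorem chirplet_deriv_replacement_second
    (g : SchwartzMap ℝ ℂ) (f : ℝ → ℂ) (hf : MemLp f 2 (volume : Measure ℝ))
    (t ξ lam : ℝ) :
    deriv (deriv (Tt f (⇑g) ξ lam)) t =
      CT f (deriv (deriv (⇑g))) t ξ lam
        - 4 * (π : ℂ) * Complex.I * (ξ : ℂ) * CT f (deriv (⇑g)) t ξ lam
        - 2 * (π : ℂ) * Complex.I * (lam : ℂ) * CT f (tw 1 (deriv (⇑g))) t ξ lam
        + (2 * (π : ℂ) * Complex.I * (ξ : ℂ)) ^ 2 * CT f (⇑g) t ξ lam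
        + 2 * (2 * (π : ℂ) * Complex.I * (ξ : ℂ)) * (2 * (π : ℂ) * Complex.I * (lam : ℂ))
            * CT f (tw 1 (⇑g)) t ξ lam
        - 2 * (π : ℂ) * Complex.I * (lam : ℂ)
            * (CT f (⇑g) t ξ lam + CT f (tw 1 (deriv (⇑g))) t ξ lam)
        + (2 * (π : ℂ) * Complex.I * (lam : ℂ)) ^ 2 * CT f (tw 2 (⇑g)) t ξ lam := by
  have e1 : deriv (Tt f (⇑g) ξ lam) = fun s =>
      -(CT f (⇑(SchwartzMap.derivCLM ℝ ℂ g)) s ξ lam)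
      + (2*(π:ℂ)*Complex.I*ξ) * CT f (⇑g) s ξ lam
      + (2*(π:ℂ)*Complex.I*lam) * CT f (⇑(ChirpAux.mulX g)) s ξ lam :=
    funext fun s => (ChirpAux.key hf ξ lam g s).deriv
  rw [e1]
  have kd := ChirpAux.key hf ξ lam (SchwartzMap.derivCLM ℝ ℂ g) t
  have kg := ChirpAux.key hf ξ lam g t
  have km := ChirpAux.key hf ξ lam (ChirpAux.mulX g) t
  have hsum : HasDerivAt (fun s =>
      -(CT f (⇑(SchwartzMap.derivCLM ℝ ℂ g)) s ξ lam)
      + (2*(π:ℂ)*Complex.I*ξ) * CT f (⇑g) s ξ lam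
      + (2*(π:ℂ)*Complex.I*lam) * CT f (⇑(ChirpAux.mulX g)) s ξ lam)
      (-(-(CT f (⇑(SchwartzMap.derivCLM ℝ ℂ (SchwartzMap.derivCLM ℝ ℂ g))) t ξ lam)
          + (2*(π:ℂ)*Complex.I*ξ) * CT f (⇑(SchwartzMap.derivCLM ℝ ℂ g)) t ξ lam
          + (2*(π:ℂ)*Complex.I*lam) * CT f (⇑(ChirpAux.mulX (SchwartzMap.derivCLM ℝ ℂ g))) t ξ lam)
        + (2*(π:ℂ)*Complex.I*ξ)
          * (-(CT f (⇑(SchwartzMap.derivCLM ℝ ℂ g)) t ξ lam)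
            + (2*(π:ℂ)*Complex.I*ξ) * CT f (⇑g) t ξ lam
            + (2*(π:ℂ)*Complex.I*lam) * CT f (⇑(ChirpAux.mulX g)) t ξ lam)
        + (2*(π:ℂ)*Complex.I*lam)
          * (-(CT f (⇑(SchwartzMap.derivCLM ℝ ℂ (ChirpAux.mulX g))) t ξ lam)
            + (2*(π:ℂ)*Complex.I*ξ) * CT f (⇑(ChirpAux.mulX g)) t ξ lam
            + (2*(π:ℂ)*Complex.I*lam) * CT f (⇑(ChirpAux.mulX (ChirpAux.mulX g))) t ξ lam)) t :=
    (kd.neg.add (kg.const_mul _)).add (km.const_mul _)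
  rw [hsum.deriv]
  have hm4 : CT f (⇑(SchwartzMap.derivCLM ℝ ℂ (ChirpAux.mulX g))) t ξ lam
      = CT f (⇑g) t ξ lam + CT f (tw 1 (deriv (⇑g))) t ξ lam := by
    have := ChirpAux.CT_window_add hf ξ lam t g (ChirpAux.mulX (SchwartzMap.derivCLM ℝ ℂ g))
    rw [ChirpAux.mulX_deriv_coe] at this
    rw [← this, ChirpAux.deriv_mulX_coe]
    refine congrArg (fun w => CT f w t ξ lam) (funext fun u => ?_)
    simp [ChirpAux.mulX_apply, SchwartzMap.derivCLM_apply, tw]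
  have hdd : ⇑(SchwartzMap.derivCLM ℝ ℂ (SchwartzMap.derivCLM ℝ ℂ g)) = deriv (deriv (⇑g)) := by
    rw [ChirpAux.derivCLM_coe, ChirpAux.derivCLM_coe]
  rw [hm4, hdd, ChirpAux.mulX_mulX_coe, ChirpAux.mulX_deriv_coe, ChirpAux.mulX_coe, ChirpAux.derivCLM_coe]
  ring
end
end

section
/- Let g be a Schwartz function on ℝ and f ∈ L²(ℝ). Then for all (t, ξ, λ) ∈ ℝ³: ∂³_{ttt} T_f^{(g)} = −T_f^{(g''')} + 6πi ξ T_f^{(g'')} + 6πi λ T_f^{(tg'')} + [6πi λ − 12(iπξ)²] T_f^{(g')} − 24(iπξ)(iπλ) T_f^{(tg')} + [8(iπξ)³ − 12(iπλ)(iπξ)] T_f^{(g)} − 12(iπλ)² T_f^{(t²g')} + [24(iπξ)²(iπλ) − 12(iπλ)²] T_f^{(tg)} + 24(iπλ)²(iπξ) T_f^{(t²g)} + 8(iπλ)³ T_f^{(t³g)}, where all transforms are evaluated at (t, ξ, λ). -/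
open MeasureTheory Real Complex Finset

noncomputable section

namespace ChirpletAux

/-- The chirp phase. -/
def ph (ξ lam : ℝ) (u : ℝ) : ℂ :=
  Complex.exp (-(2 * (π : ℂ) * Complex.I * (ξ : ℂ) * (u : ℂ))
    - Complex.I * (π : ℂ) * (lam : ℂ) * (u : ℂ) ^ 2)

/-- Window family `x^n * (d/dx)^k g`. -/
def Wnd (g : ℝ → ℂ) (n k : ℕ) : ℝ → ℂ := fun x => (x : ℂ) ^ n * deriv^[k] g x

lemma CT_eq_integral (f h : ℝ → ℂ) (t ξ lam : ℝ) :
    CT f h t ξ lam = ∫ x : ℝ, f x * (starRingEnd ℂ) (h (x - t)) * ph ξ lam (x - t) := by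
  unfold CT ph
  congr 1
  funext x
  push_cast
  ring_nf

lemma norm_ph (ξ lam u : ℝ) : ‖ph ξ lam u‖ = 1 := by
  rw [ph, Complex.norm_exp]
  have : (-(2 * (π:ℂ) * Complex.I * (ξ:ℂ) * (u:ℂ))
      - Complex.I * (π:ℂ) * (lam:ℂ) * (u:ℂ) ^ 2).re = 0 := by
    simp [Complex.mul_re, Complex.mul_im, pow_two]
  rw [this, Real.exp_zero]

lemma continuous_ph (ξ lam : ℝ) : Continuous (ph ξ lam) := by
  unfold ph
  fun_prop

lemma hasDerivAt_ph (ξ lam u : ℝ) :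
    HasDerivAt (ph ξ lam)
      ((-(2 * (π:ℂ) * Complex.I * (ξ:ℂ)) - 2 * (π:ℂ) * Complex.I * (lam:ℂ) * (u:ℂ))
        * ph ξ lam u) u := by
  have h1 : HasDerivAt (fun v : ℝ => (v : ℂ)) 1 u := (hasDerivAt_id u).ofReal_comp
  have ha := (h1.const_mul (2 * (π:ℂ) * Complex.I * (ξ:ℂ))).neg
  have hb := ((hasDerivAt_pow 2 ((u:ℂ))).comp_ofReal).const_mul (Complex.I * (π:ℂ) * (lam:ℂ))
  have h2 := (ha.sub hb).cexp
  unfold ph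
  convert h2 using 1
  · funext y
    simp only [Pi.sub_apply, Pi.neg_apply]
  · simp only [Pi.sub_apply, Pi.neg_apply]
    push_cast
    ring

/-- Iterated derivative as a Schwartz map. -/
def itD (g : SchwartzMap ℝ ℂ) (k : ℕ) : SchwartzMap ℝ ℂ := (SchwartzMap.derivCLM ℝ ℂ)^[k] g

lemma itD_coe (g : SchwartzMap ℝ ℂ) (k : ℕ) : ⇑(itD g k) = deriv^[k] (⇑g) := by
  induction k with
  | zero => rfl
  | succ k ih =>
    rw [itD, Function.iterate_succ_apply', Function.iterate_succ_apply']
    funext x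
    rw [SchwartzMap.derivCLM_apply, ← itD, ih]

lemma schwartz_decay_poly (h : SchwartzMap ℝ ℂ) (n : ℕ) :
    ∃ C : ℝ, 0 ≤ C ∧ ∀ x : ℝ, (1 + x ^ 2) * ‖(x : ℂ) ^ n * h x‖ ≤ C := by
  obtain ⟨C₁, hC₁pos, hC₁⟩ := h.decay n 0
  obtain ⟨C₂, hC₂pos, hC₂⟩ := h.decay (n + 2) 0
  refine ⟨C₁ + C₂, by positivity, fun x => ?_⟩
  have h1 := hC₁ x
  have h2 := hC₂ x
  rw [norm_iteratedFDeriv_zero, Real.norm_eq_abs] at h1 h2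
  have e : ‖(x : ℂ) ^ n * h x‖ = |x| ^ n * ‖h x‖ := by
    rw [norm_mul, norm_pow, Complex.norm_real, Real.norm_eq_abs]
  have e2 : (1 + x ^ 2) * (|x| ^ n * ‖h x‖)
      = |x| ^ n * ‖h x‖ + |x| ^ (n + 2) * ‖h x‖ := by
    have hx : x ^ 2 = |x| ^ 2 := (_root_.sq_abs x).symm
    rw [hx]; ring
  rw [e, e2]
  exact add_le_add h1 h2

lemma Wnd_decay (g : SchwartzMap ℝ ℂ) (n k : ℕ) :
    ∃ C : ℝ, 0 ≤ C ∧ ∀ x : ℝ, ‖Wnd (⇑g) n k x‖ ≤ C / (1 + x ^ 2) := by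
  obtain ⟨C, hC0, hC⟩ := schwartz_decay_poly (itD g k) n
  refine ⟨C, hC0, fun x => ?_⟩
  rw [le_div_iff₀ (by positivity : (0:ℝ) < 1 + x ^ 2)]
  have h := hC x
  rw [itD_coe] at h
  calc ‖Wnd (⇑g) n k x‖ * (1 + x ^ 2)
      = (1 + x ^ 2) * ‖(x : ℂ) ^ n * deriv^[k] (⇑g) x‖ := by rw [mul_comm]; rfl
    _ ≤ C := h

lemma Wnd_continuous (g : SchwartzMap ℝ ℂ) (n k : ℕ) : Continuous (Wnd (⇑g) n k) := by
  have h := ContDiff.iterate_deriv k (g.smooth ⊤)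
  exact (Complex.continuous_ofReal.pow n).mul h.continuous

lemma Wnd_hasDerivAt (g : SchwartzMap ℝ ℂ) (n k : ℕ) (x : ℝ) :
    HasDerivAt (Wnd (⇑g) n k)
      ((n : ℂ) * Wnd (⇑g) (n - 1) k x + Wnd (⇑g) n (k + 1) x) x := by
  have hg := ContDiff.iterate_deriv k (g.smooth ⊤)
  have hd : HasDerivAt (deriv^[k] (⇑g)) (deriv^[k + 1] (⇑g) x) x := by
    rw [Function.iterate_succ_apply']
    exact ((hg.differentiable (by simp)).differentiableAt).hasDerivAt
  have hp : HasDerivAt (fun y : ℝ => ((y : ℂ)) ^ n) ((n : ℂ) * (x : ℂ) ^ (n - 1)) x :=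
    (hasDerivAt_pow n ((x : ℂ))).comp_ofReal
  have := hp.mul hd
  convert this using 1
  · rfl
  · rfl
  simp only [Wnd]
  ring

/-- "Derivative window": the window appearing after differentiating in `t`. -/
def DW (g : ℝ → ℂ) (ξ lam : ℝ) (n k : ℕ) : ℝ → ℂ := fun u =>
  -(Wnd g n (k + 1) u) - (n : ℂ) * Wnd g (n - 1) k u
    - 2 * (π : ℂ) * Complex.I * (ξ : ℂ) * Wnd g n k u
    - 2 * (π : ℂ) * Complex.I * (lam : ℂ) * Wnd g (n + 1) k u

lemma DW_continuous (g : SchwartzMap ℝ ℂ) (ξ lam : ℝ) (n k : ℕ) :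
    Continuous (DW (⇑g) ξ lam n k) := by
  unfold DW
  exact (((Wnd_continuous g n (k+1)).neg.sub
      ((continuous_const).mul (Wnd_continuous g (n-1) k))).sub
      ((continuous_const).mul (Wnd_continuous g n k))).sub
      ((continuous_const).mul (Wnd_continuous g (n+1) k))

lemma DW_decay (g : SchwartzMap ℝ ℂ) (ξ lam : ℝ) (n k : ℕ) :
    ∃ C : ℝ, 0 ≤ C ∧ ∀ u : ℝ, ‖DW (⇑g) ξ lam n k u‖ ≤ C / (1 + u ^ 2) := by
  obtain ⟨C1, h10, h1⟩ := Wnd_decay g n (k + 1)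
  obtain ⟨C2, h20, h2⟩ := Wnd_decay g (n - 1) k
  obtain ⟨C3, h30, h3⟩ := Wnd_decay g n k
  obtain ⟨C4, h40, h4⟩ := Wnd_decay g (n + 1) k
  refine ⟨C1 + (n : ℝ) * C2 + ‖2 * (π : ℂ) * Complex.I * (ξ : ℂ)‖ * C3
      + ‖2 * (π : ℂ) * Complex.I * (lam : ℂ)‖ * C4, by positivity, fun u => ?_⟩
  have hpos : (0:ℝ) < 1 + u ^ 2 := by positivity
  have step : ‖DW (⇑g) ξ lam n k u‖ ≤ ‖Wnd (⇑g) n (k+1) u‖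
      + (n : ℝ) * ‖Wnd (⇑g) (n-1) k u‖
      + ‖2 * (π : ℂ) * Complex.I * (ξ : ℂ)‖ * ‖Wnd (⇑g) n k u‖
      + ‖2 * (π : ℂ) * Complex.I * (lam : ℂ)‖ * ‖Wnd (⇑g) (n+1) k u‖ := by
    unfold DW
    refine le_trans (norm_sub_le _ _) (add_le_add (le_trans (norm_sub_le _ _)
      (add_le_add (le_trans (norm_sub_le _ _) (add_le_add (le_of_eq (norm_neg _))
      (le_of_eq (by rw [norm_mul, Complex.norm_natCast]))))
      (le_of_eq (norm_mul _ _)))) (le_of_eq (norm_mul _ _)))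
  refine step.trans ?_
  calc ‖Wnd (⇑g) n (k+1) u‖ + (n : ℝ) * ‖Wnd (⇑g) (n-1) k u‖
      + ‖2 * (π : ℂ) * Complex.I * (ξ : ℂ)‖ * ‖Wnd (⇑g) n k u‖
      + ‖2 * (π : ℂ) * Complex.I * (lam : ℂ)‖ * ‖Wnd (⇑g) (n+1) k u‖
      ≤ C1 / (1 + u ^ 2) + (n : ℝ) * (C2 / (1 + u ^ 2))
        + ‖2 * (π : ℂ) * Complex.I * (ξ : ℂ)‖ * (C3 / (1 + u ^ 2))
        + ‖2 * (π : ℂ) * Complex.I * (lam : ℂ)‖ * (C4 / (1 + u ^ 2)) := by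
        gcongr <;> [exact h1 u; exact h2 u; exact h3 u; exact h4 u]
    _ = (C1 + (n : ℝ) * C2 + ‖2 * (π : ℂ) * Complex.I * (ξ : ℂ)‖ * C3
        + ‖2 * (π : ℂ) * Complex.I * (lam : ℂ)‖ * C4) / (1 + u ^ 2) := by
        field_simp

lemma memL2_aux (t C : ℝ) (hC : 0 ≤ C) :
    MemLp (fun x : ℝ => C / (1 + (x - t) ^ 2)) 2 (volume : Measure ℝ) := by
  have hcont : Continuous (fun x : ℝ => C / (1 + (x - t) ^ 2)) := by
    apply continuous_const.div (by continuity)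
    intro x; positivity
  rw [memLp_two_iff_integrable_sq hcont.aestronglyMeasurable]
  have hbase : Integrable (fun x : ℝ => (1 + (x - t) ^ 2)⁻¹) (volume : Measure ℝ) := by
    have := integrable_inv_one_add_sq.comp_sub_right t
    simpa using this
  refine (hbase.const_mul (C ^ 2)).mono' (hcont.pow 2).aestronglyMeasurable ?_
  filter_upwards with x
  have hpos : (0:ℝ) < 1 + (x - t) ^ 2 := by positivity
  rw [Real.norm_eq_abs, _root_.abs_of_nonneg (by positivity)]
  rw [div_pow, ← div_eq_mul_inv, div_le_div_iff₀ (by positivity) hpos]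
  nlinarith [mul_nonneg (mul_nonneg (sq_nonneg C) hpos.le) (sq_nonneg (x - t))]

lemma integrable_window {f : ℝ → ℂ} (hf : MemLp f 2 (volume : Measure ℝ))
    (h : ℝ → ℂ) (hcont : Continuous h) (C : ℝ) (hC0 : 0 ≤ C)
    (hbd : ∀ u : ℝ, ‖h u‖ ≤ C / (1 + u ^ 2)) (t ξ lam : ℝ) :
    Integrable (fun x : ℝ => f x * (starRingEnd ℂ) (h (x - t)) * ph ξ lam (x - t))
      (volume : Measure ℝ) := by
  set φ : ℝ → ℂ := fun x => (starRingEnd ℂ) (h (x - t)) * ph ξ lam (x - t) with hφdef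
  have hφcont : Continuous φ := by
    apply Continuous.mul
    · exact Complex.continuous_conj.comp (hcont.comp (continuous_id.sub continuous_const))
    · exact (continuous_ph ξ lam).comp (continuous_id.sub continuous_const)
  have hφ : MemLp φ 2 (volume : Measure ℝ) := by
    refine MemLp.of_le (memL2_aux t C hC0) hφcont.aestronglyMeasurable ?_
    filter_upwards with x
    rw [hφdef]
    simp only [norm_mul, norm_ph, mul_one, RCLike.norm_conj]
    exact (hbd (x - t)).trans (le_abs_self _)
  have hexp : (1 : ENNReal) / 1 = 1 / 2 + 1 / 2 := by
    rw [ENNReal.div_add_div_same, one_div_one]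
    rw [show (1 : ENNReal) + 1 = 2 from one_add_one_eq_two]
    rw [ENNReal.div_self (by norm_num) (by norm_num)]
  have hsm : MemLp (φ • f) 1 (volume : Measure ℝ) := MemLp.smul (r := 1) hf hφ
  refine (memLp_one_iff_integrable.mp hsm).congr
    (Filter.Eventually.of_forall fun x => ?_)
  simp only [Pi.smul_apply', Pi.smul_apply, smul_eq_mul, hφdef]
  ring

lemma ball_bound (t₀ t' x : ℝ) (ht' : t' ∈ Metric.ball t₀ 1) (C : ℝ) (hC : 0 ≤ C) :
    C / (1 + (x - t') ^ 2) ≤ 3 * C / (1 + (x - t₀) ^ 2) := by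
  rw [Metric.mem_ball, Real.dist_eq] at ht'
  have h1 : (t' - t₀) ^ 2 ≤ 1 := by nlinarith [abs_nonneg (t' - t₀), _root_.sq_abs (t' - t₀), le_of_lt ht']
  rw [div_le_div_iff₀ (by positivity) (by positivity)]
  nlinarith [sq_nonneg ((x - t') - (t' - t₀)), sq_nonneg (x - t'),
    mul_nonneg hC (sq_nonneg ((x - t') - (t' - t₀))), mul_nonneg hC (sq_nonneg (x - t')),
    mul_nonneg hC (sq_nonneg (t' - t₀))]

/-- The integral defining `CT` with window `Wnd g n k`, as a function of `t`. -/
def Sfun (f : ℝ → ℂ) (g : SchwartzMap ℝ ℂ) (ξ lam : ℝ) (n k : ℕ) : ℝ → ℂ := fun t =>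
  ∫ x : ℝ, f x * (starRingEnd ℂ) (Wnd (⇑g) n k (x - t)) * ph ξ lam (x - t)

lemma integrand_hasDerivAt (f : ℝ → ℂ) (g : SchwartzMap ℝ ℂ) (ξ lam : ℝ) (n k : ℕ)
    (x t : ℝ) :
    HasDerivAt
      (fun s : ℝ => f x * (starRingEnd ℂ) (Wnd (⇑g) n k (x - s)) * ph ξ lam (x - s))
      (f x * (starRingEnd ℂ) (DW (⇑g) ξ lam n k (x - t)) * ph ξ lam (x - t)) t := by
  have hsub : HasDerivAt (fun s : ℝ => x - s) (-1 : ℝ) t := by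
    simpa using (hasDerivAt_id t).const_sub x
  have hW : HasDerivAt (fun s : ℝ => Wnd (⇑g) n k (x - s))
      ((-1 : ℝ) • ((n : ℂ) * Wnd (⇑g) (n - 1) k (x - t) + Wnd (⇑g) n (k + 1) (x - t))) t :=
    (Wnd_hasDerivAt g n k (x - t)).scomp t hsub
  have hWc := hW.star
  have hP : HasDerivAt (fun s : ℝ => ph ξ lam (x - s))
      ((-1 : ℝ) • ((-(2 * (π:ℂ) * Complex.I * (ξ:ℂ))
        - 2 * (π:ℂ) * Complex.I * (lam:ℂ) * ((x - t : ℝ) : ℂ)) * ph ξ lam (x - t))) t :=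
    (hasDerivAt_ph ξ lam (x - t)).scomp t hsub
  have htot := (hWc.const_mul (f x)).mul hP
  convert htot using 1
  · rfl
  · rfl
  simp only [DW, Wnd, star_smul, star_trivial, Complex.star_def, map_mul, map_add, map_sub,
    map_neg, map_pow, map_natCast, map_one, map_ofNat, Complex.conj_I, Complex.conj_ofReal,
    real_smul, Complex.ofReal_neg, Complex.ofReal_one, Complex.ofReal_sub]
  push_cast
  ring

lemma DW_integrand_eq (f : ℝ → ℂ) (g : SchwartzMap ℝ ℂ) (ξ lam : ℝ) (n k : ℕ) (x t : ℝ) :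
    f x * (starRingEnd ℂ) (DW (⇑g) ξ lam n k (x - t)) * ph ξ lam (x - t)
      = (-1 : ℂ) * (f x * (starRingEnd ℂ) (Wnd (⇑g) n (k + 1) (x - t)) * ph ξ lam (x - t))
        + (-(n : ℂ)) * (f x * (starRingEnd ℂ) (Wnd (⇑g) (n - 1) k (x - t)) * ph ξ lam (x - t))
        + (2 * (π:ℂ) * Complex.I * (ξ:ℂ))
            * (f x * (starRingEnd ℂ) (Wnd (⇑g) n k (x - t)) * ph ξ lam (x - t))
        + (2 * (π:ℂ) * Complex.I * (lam:ℂ))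
            * (f x * (starRingEnd ℂ) (Wnd (⇑g) (n + 1) k (x - t)) * ph ξ lam (x - t)) := by
  simp only [DW, map_sub, map_neg, map_mul, map_natCast, Complex.conj_I,
    Complex.conj_ofReal, map_ofNat]
  ring

lemma integrable_S (f : ℝ → ℂ) (hf : MemLp f 2 (volume : Measure ℝ))
    (g : SchwartzMap ℝ ℂ) (ξ lam : ℝ) (n k : ℕ) (t : ℝ) :
    Integrable (fun x : ℝ => f x * (starRingEnd ℂ) (Wnd (⇑g) n k (x - t)) * ph ξ lam (x - t))
      (volume : Measure ℝ) := by
  obtain ⟨C, hC0, hC⟩ := Wnd_decay g n k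
  exact integrable_window hf _ (Wnd_continuous g n k) C hC0 hC t ξ lam

lemma hasDerivAt_S (f : ℝ → ℂ) (hf : MemLp f 2 (volume : Measure ℝ))
    (g : SchwartzMap ℝ ℂ) (ξ lam : ℝ) (n k : ℕ) (t₀ : ℝ) :
    HasDerivAt (Sfun f g ξ lam n k)
      ((-1 : ℂ) * Sfun f g ξ lam n (k + 1) t₀
        + (-(n : ℂ)) * Sfun f g ξ lam (n - 1) k t₀
        + (2 * (π:ℂ) * Complex.I * (ξ:ℂ)) * Sfun f g ξ lam n k t₀
        + (2 * (π:ℂ) * Complex.I * (lam:ℂ)) * Sfun f g ξ lam (n + 1) k t₀) t₀ := by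
  obtain ⟨C, hC0, hC⟩ := DW_decay g ξ lam n k
  have key := hasDerivAt_integral_of_dominated_loc_of_deriv_le (μ := (volume : Measure ℝ))
    (F := fun t x => f x * (starRingEnd ℂ) (Wnd (⇑g) n k (x - t)) * ph ξ lam (x - t))
    (F' := fun t x => f x * (starRingEnd ℂ) (DW (⇑g) ξ lam n k (x - t)) * ph ξ lam (x - t))
    (x₀ := t₀) (s := Metric.ball t₀ 1) (bound := fun x => ‖f x‖ * (3 * C / (1 + (x - t₀) ^ 2)))
    (Metric.ball_mem_nhds t₀ one_pos)
    (Filter.Eventually.of_forall fun t =>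
      (integrable_S f hf g ξ lam n k t).aestronglyMeasurable)
    (integrable_S f hf g ξ lam n k t₀)
    (integrable_window hf _ (DW_continuous g ξ lam n k) C hC0 hC t₀ ξ lam).aestronglyMeasurable
    (Filter.Eventually.of_forall fun x => fun t' ht' => ?_)
    ?_
    (Filter.Eventually.of_forall fun x => fun t' _ => integrand_hasDerivAt f g ξ lam n k x t')
  · have h2 := key.2
    have hsplit : (∫ x : ℝ, f x * (starRingEnd ℂ) (DW (⇑g) ξ lam n k (x - t₀))
        * ph ξ lam (x - t₀))
        = (-1 : ℂ) * Sfun f g ξ lam n (k + 1) t₀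
          + (-(n : ℂ)) * Sfun f g ξ lam (n - 1) k t₀
          + (2 * (π:ℂ) * Complex.I * (ξ:ℂ)) * Sfun f g ξ lam n k t₀
          + (2 * (π:ℂ) * Complex.I * (lam:ℂ)) * Sfun f g ξ lam (n + 1) k t₀ := by
      have i1 := (integrable_S f hf g ξ lam n (k + 1) t₀).const_mul (-1 : ℂ)
      have i2 := (integrable_S f hf g ξ lam (n - 1) k t₀).const_mul (-(n : ℂ))
      have i3 := (integrable_S f hf g ξ lam n k t₀).const_mul
        (2 * (π:ℂ) * Complex.I * (ξ:ℂ))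
      have i4 := (integrable_S f hf g ξ lam (n + 1) k t₀).const_mul
        (2 * (π:ℂ) * Complex.I * (lam:ℂ))
      rw [show (fun x : ℝ => f x * (starRingEnd ℂ) (DW (⇑g) ξ lam n k (x - t₀))
          * ph ξ lam (x - t₀))
          = fun x : ℝ =>
            ((-1 : ℂ) * (f x * (starRingEnd ℂ) (Wnd (⇑g) n (k + 1) (x - t₀)) * ph ξ lam (x - t₀))
            + (-(n : ℂ)) * (f x * (starRingEnd ℂ) (Wnd (⇑g) (n - 1) k (x - t₀)) * ph ξ lam (x - t₀)))
            + ((2 * (π:ℂ) * Complex.I * (ξ:ℂ))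
                * (f x * (starRingEnd ℂ) (Wnd (⇑g) n k (x - t₀)) * ph ξ lam (x - t₀))
            + (2 * (π:ℂ) * Complex.I * (lam:ℂ))
                * (f x * (starRingEnd ℂ) (Wnd (⇑g) (n + 1) k (x - t₀)) * ph ξ lam (x - t₀)))
          from funext fun x => by rw [DW_integrand_eq f g ξ lam n k x t₀]; ring]
      have i12 : Integrable (fun x : ℝ =>
          (-1 : ℂ) * (f x * (starRingEnd ℂ) (Wnd (⇑g) n (k + 1) (x - t₀)) * ph ξ lam (x - t₀))
          + (-(n : ℂ)) * (f x * (starRingEnd ℂ) (Wnd (⇑g) (n - 1) k (x - t₀))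
            * ph ξ lam (x - t₀))) (volume : Measure ℝ) := i1.add i2
      have i34 : Integrable (fun x : ℝ =>
          (2 * (π:ℂ) * Complex.I * (ξ:ℂ))
            * (f x * (starRingEnd ℂ) (Wnd (⇑g) n k (x - t₀)) * ph ξ lam (x - t₀))
          + (2 * (π:ℂ) * Complex.I * (lam:ℂ))
            * (f x * (starRingEnd ℂ) (Wnd (⇑g) (n + 1) k (x - t₀))
              * ph ξ lam (x - t₀))) (volume : Measure ℝ) := i3.add i4
      rw [integral_add i12 i34, integral_add i1 i2, integral_add i3 i4,
        integral_const_mul, integral_const_mul, integral_const_mul, integral_const_mul]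
      simp only [Sfun]
      ring
    rw [hsplit] at h2
    exact h2
  · -- h_bound
    rw [norm_mul, norm_mul, norm_ph, mul_one, RCLike.norm_conj]
    have hb := (hC (x - t')).trans (ball_bound t₀ t' x ht' C hC0)
    exact mul_le_mul_of_nonneg_left hb (norm_nonneg _)
  · -- bound_integrable
    have hφ : MemLp (fun x : ℝ => 3 * C / (1 + (x - t₀) ^ 2)) 2 (volume : Measure ℝ) :=
      memL2_aux t₀ (3 * C) (by positivity)
    have hexp : (1 : ENNReal) / 1 = 1 / 2 + 1 / 2 := by
      rw [ENNReal.div_add_div_same, one_div_one]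
      rw [show (1 : ENNReal) + 1 = 2 from one_add_one_eq_two]
      rw [ENNReal.div_self (by norm_num) (by norm_num)]
    have hsm : MemLp ((fun x : ℝ => 3 * C / (1 + (x - t₀) ^ 2)) • fun x => ‖f x‖) 1
        (volume : Measure ℝ) := MemLp.smul (r := 1) hf.norm hφ
    refine (memLp_one_iff_integrable.mp hsm).congr (Filter.Eventually.of_forall fun x => ?_)
    simp only [Pi.smul_apply', Pi.smul_apply, smul_eq_mul]
    ring

lemma Wnd_eq (g : SchwartzMap ℝ ℂ) :
    Wnd (⇑g) 0 0 = ⇑g ∧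
    Wnd (⇑g) 0 1 = deriv (⇑g) ∧
    Wnd (⇑g) 0 2 = deriv (deriv (⇑g)) ∧
    Wnd (⇑g) 0 3 = deriv (deriv (deriv (⇑g))) ∧
    Wnd (⇑g) 1 0 = tw 1 (⇑g) ∧
    Wnd (⇑g) 1 1 = tw 1 (deriv (⇑g)) ∧
    Wnd (⇑g) 1 2 = tw 1 (deriv (deriv (⇑g))) ∧
    Wnd (⇑g) 2 0 = tw 2 (⇑g) ∧
    Wnd (⇑g) 2 1 = tw 2 (deriv (⇑g)) ∧
    Wnd (⇑g) 3 0 = tw 3 (⇑g) := by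
  refine ⟨?_, ?_, ?_, ?_, ?_, ?_, ?_, ?_, ?_, ?_⟩ <;>
    funext x <;>
    simp [Wnd, tw, Function.iterate_succ_apply', Function.comp]

lemma CT_S (f : ℝ → ℂ) (g : SchwartzMap ℝ ℂ) (ξ lam : ℝ) (n k : ℕ) (t : ℝ) :
    CT f (Wnd (⇑g) n k) t ξ lam = Sfun f g ξ lam n k t := by
  rw [CT_eq_integral]; rfl

end ChirpletAux

open ChirpletAux in
theorem chirplet_deriv_replacement_third
    (g : SchwartzMap ℝ ℂ) (f : ℝ → ℂ) (hf : MemLp f 2 (volume : Measure ℝ))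
    (t ξ lam : ℝ) :
    deriv (deriv (deriv (Tt f (⇑g) ξ lam))) t =
      -CT f (deriv (deriv (deriv (⇑g)))) t ξ lam
        + 6 * (π : ℂ) * Complex.I * (ξ : ℂ) * CT f (deriv (deriv (⇑g))) t ξ lam
        + 6 * (π : ℂ) * Complex.I * (lam : ℂ) * CT f (tw 1 (deriv (deriv (⇑g)))) t ξ lam
        + (6 * (π : ℂ) * Complex.I * (lam : ℂ)
            - 12 * (Complex.I * (π : ℂ) * (ξ : ℂ)) ^ 2) * CT f (deriv (⇑g)) t ξ lam
        - 24 * (Complex.I * (π : ℂ) * (ξ : ℂ)) * (Complex.I * (π : ℂ) * (lam : ℂ))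
            * CT f (tw 1 (deriv (⇑g))) t ξ lam
        + (8 * (Complex.I * (π : ℂ) * (ξ : ℂ)) ^ 3
            - 12 * (Complex.I * (π : ℂ) * (lam : ℂ)) * (Complex.I * (π : ℂ) * (ξ : ℂ)))
            * CT f (⇑g) t ξ lam
        - 12 * (Complex.I * (π : ℂ) * (lam : ℂ)) ^ 2 * CT f (tw 2 (deriv (⇑g))) t ξ lam
        + (24 * (Complex.I * (π : ℂ) * (ξ : ℂ)) ^ 2 * (Complex.I * (π : ℂ) * (lam : ℂ))
            - 12 * (Complex.I * (π : ℂ) * (lam : ℂ)) ^ 2) * CT f (tw 1 (⇑g)) t ξ lam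
        + 24 * (Complex.I * (π : ℂ) * (lam : ℂ)) ^ 2 * (Complex.I * (π : ℂ) * (ξ : ℂ))
            * CT f (tw 2 (⇑g)) t ξ lam
        + 8 * (Complex.I * (π : ℂ) * (lam : ℂ)) ^ 3 * CT f (tw 3 (⇑g)) t ξ lam := by
  obtain ⟨e00, e01, e02, e03, e10, e11, e12, e20, e21, e30⟩ := Wnd_eq g
  have hS := fun (n k : ℕ) (s : ℝ) => hasDerivAt_S f hf g ξ lam n k s
  have hT : Tt f (⇑g) ξ lam = Sfun f g ξ lam 0 0 := by
    funext s
    rw [show Tt f (⇑g) ξ lam s = CT f (Wnd (⇑g) 0 0) s ξ lam by rw [e00]; rfl, CT_S]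
  have d1 : deriv (Tt f (⇑g) ξ lam) = (fun s => (-1 : ℂ) * Sfun f g ξ lam 0 1 s + (2 * (π:ℂ) * Complex.I * (ξ:ℂ)) * Sfun f g ξ lam 0 0 s + (2 * (π:ℂ) * Complex.I * (lam:ℂ)) * Sfun f g ξ lam 1 0 s) := by
    rw [hT]; funext s
    rw [(hS 0 0 s).deriv]
    simp only [Nat.cast_zero, Nat.cast_one, Nat.zero_sub, Nat.sub_self, Nat.reduceAdd,
      Nat.reduceSub]
    ring
  have d2 : deriv (fun s => (-1 : ℂ) * Sfun f g ξ lam 0 1 s + (2 * (π:ℂ) * Complex.I * (ξ:ℂ)) * Sfun f g ξ lam 0 0 s + (2 * (π:ℂ) * Complex.I * (lam:ℂ)) * Sfun f g ξ lam 1 0 s) = (fun s => (1 : ℂ) * Sfun f g ξ lam 0 2 s + (-2 * (2 * (π:ℂ) * Complex.I * (ξ:ℂ))) * Sfun f g ξ lam 0 1 s + (-2 * (2 * (π:ℂ) * Complex.I * (lam:ℂ))) * Sfun f g ξ lam 1 1 s + ((2 * (π:ℂ) * Complex.I * (ξ:ℂ)) ^ 2 - (2 * (π:ℂ) * Complex.I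 * (lam:ℂ))) * Sfun f g ξ lam 0 0 s + (2 * (2 * (π:ℂ) * Complex.I * (ξ:ℂ)) * (2 * (π:ℂ) * Complex.I * (lam:ℂ))) * Sfun f g ξ lam 1 0 s + ((2 * (π:ℂ) * Complex.I * (lam:ℂ)) ^ 2) * Sfun f g ξ lam 2 0 s) := by
    funext s
    have hE1 : HasDerivAt (fun s => (-1 : ℂ) * Sfun f g ξ lam 0 1 s + (2 * (π:ℂ) * Complex.I * (ξ:ℂ)) * Sfun f g ξ lam 0 0 s + (2 * (π:ℂ) * Complex.I * (lam:ℂ)) * Sfun f g ξ lam 1 0 s) _ s :=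
      (((hS 0 1 s).const_mul ((-1 : ℂ))).add ((hS 0 0 s).const_mul (2 * (π:ℂ) * Complex.I * (ξ:ℂ)))).add
        ((hS 1 0 s).const_mul (2 * (π:ℂ) * Complex.I * (lam:ℂ)))
    rw [hE1.deriv]
    simp only [Nat.cast_zero, Nat.cast_one, Nat.zero_sub, Nat.sub_self, Nat.reduceAdd,
      Nat.reduceSub]
    ring
  have d3 : deriv (fun s => (1 : ℂ) * Sfun f g ξ lam 0 2 s + (-2 * (2 * (π:ℂ) * Complex.I * (ξ:ℂ))) * Sfun f g ξ lam 0 1 s + (-2 * (2 * (π:ℂ) * Complex.I * (lam:ℂ))) * Sfun f g ξ lam 1 1 s + ((2 * (π:ℂ) * Complex.I * (ξ:ℂ)) ^ 2 - (2 * (π:ℂ) * Complex.I * (lam:ℂ))) * Sfun f g ξ lam 0 0 s + (2 * (2 * (π:ℂ) * Complex.I * (ξ:ℂ)) * (2 * (π:ℂ) * Complex.I * (lam:ℂ))) * Sfun f g ξ lam 1 0 s + ((2 * (π:ℂ) * Complex.I * (lam:ℂ)) ^ 2) * Sfun f g ξ lam 2 0 s) = (fun s => (-1 : ℂ) * Sfun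 f g ξ lam 0 3 s + (3 * (2 * (π:ℂ) * Complex.I * (ξ:ℂ))) * Sfun f g ξ lam 0 2 s + (3 * (2 * (π:ℂ) * Complex.I * (lam:ℂ))) * Sfun f g ξ lam 1 2 s + (3 * (2 * (π:ℂ) * Complex.I * (lam:ℂ)) - 3 * (2 * (π:ℂ) * Complex.I * (ξ:ℂ)) ^ 2) * Sfun f g ξ lam 0 1 s + (-6 * (2 * (π:ℂ) * Complex.I * (ξ:ℂ)) * (2 * (π:ℂ) * Complex.I * (lam:ℂ))) * Sfun f g ξ lam 1 1 s + ((2 * (π:ℂ) * Complex.I * (ξ:ℂ)) ^ 3 - 3 * (2 * (π:ℂ) * Complex.I * (ξ:ℂ)) * (2 * (π:ℂ) * Complex.I * (lam:ℂ))) * Sfun f g ξ lam 0 0 s + (-3 * (2 * (π:ℂ) * Complex.I * (lam:ℂ)) ^ 2) * Sfun f g ξ lam 2 1 s + (3 * (2 * (π:ℂ) * Complex.I * (ξ:ℂ)) ^ 2 * (2 * (π:ℂ) * Complex.I * (lam:ℂ)) - 3 * (2 * (π:ℂ) * Complex.I * (lam:ℂ)) ^ 2) * Sfun f g ξ lam 1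 0 s + (3 * (2 * (π:ℂ) * Complex.I * (ξ:ℂ)) * (2 * (π:ℂ) * Complex.I * (lam:ℂ)) ^ 2) * Sfun f g ξ lam 2 0 s + ((2 * (π:ℂ) * Complex.I * (lam:ℂ)) ^ 3) * Sfun f g ξ lam 3 0 s) := by
    funext s
    have hE2 : HasDerivAt (fun s => (1 : ℂ) * Sfun f g ξ lam 0 2 s + (-2 * (2 * (π:ℂ) * Complex.I * (ξ:ℂ))) * Sfun f g ξ lam 0 1 s + (-2 * (2 * (π:ℂ) * Complex.I * (lam:ℂ))) * Sfun f g ξ lam 1 1 s + ((2 * (π:ℂ) * Complex.I * (ξ:ℂ)) ^ 2 - (2 * (π:ℂ) * Complex.I * (lam:ℂ))) * Sfun f g ξ lam 0 0 s + (2 * (2 * (π:ℂ) * Complex.I * (ξ:ℂ)) * (2 * (π:ℂ) * Complex.I * (lam:ℂ))) * Sfun f g ξ lam 1 0 s + ((2 * (π:ℂ) * Complex.I * (lam:ℂ)) ^ 2) * Sfun f g ξ lam 2 0 s) _ s :=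
      ((((((hS 0 2 s).const_mul ((1 : ℂ))).add
        ((hS 0 1 s).const_mul (-2 * (2 * (π:ℂ) * Complex.I * (ξ:ℂ))))).add
        ((hS 1 1 s).const_mul (-2 * (2 * (π:ℂ) * Complex.I * (lam:ℂ))))).add
        ((hS 0 0 s).const_mul ((2 * (π:ℂ) * Complex.I * (ξ:ℂ)) ^ 2 - (2 * (π:ℂ) * Complex.I * (lam:ℂ))))).add
        ((hS 1 0 s).const_mul (2 * (2 * (π:ℂ) * Complex.I * (ξ:ℂ)) * (2 * (π:ℂ) * Complex.I * (lam:ℂ))))).add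
        ((hS 2 0 s).const_mul ((2 * (π:ℂ) * Complex.I * (lam:ℂ)) ^ 2))
    rw [hE2.deriv]
    simp only [Nat.cast_zero, Nat.cast_one, Nat.cast_ofNat, Nat.zero_sub, Nat.sub_self,
      Nat.reduceAdd, Nat.reduceSub]
    ring
  rw [d1, d2, d3]
  have ct : ∀ (h : ℝ → ℂ) (n k : ℕ), Wnd (⇑g) n k = h →
      CT f h t ξ lam = Sfun f g ξ lam n k t := fun h n k e => by rw [← e, CT_S]
  rw [ct _ 0 3 e03, ct _ 0 2 e02, ct _ 1 2 e12, ct _ 0 1 e01, ct _ 1 1 e11, ct _ 0 0 e00,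
    ct _ 2 1 e21, ct _ 1 0 e10, ct _ 2 0 e20, ct _ 3 0 e30]
  ring
end
end
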